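/- arXiv:1902.06488 — 4 statements merged into one kernel-verified Lean document; each statement's English description precedes it below -/
import Mathlib

section
/- Consider the one-step Roe-type update ρᵢ^{new} = ρᵢ - λ [V(x_{i+1/2}, ρᵢ, ρ_{i+1}) + F(ρᵢ, ρ_{i+1}, J_{i+1/2}) - V(x_{i-1/2}, ρ_{i-1}, ρᵢ) - F(ρ_{i-1}, ρᵢ, J_{i-1/2})], where V(x,u,w) = v(x) u + min{0, v(x)}(w-u) and F(u,w,J) = J f(u) + min{0,J}(f(w)-f(u)). If ρⱼ ≥ 0 for all j, f : ℝ⁺ → ℝ⁺ with f(0) = 0 and 0 ≤ f(r) ≤ r, |v(x)| ≤ V_max, |J_{i±1/2}| ≤ ε, and λ ≤ 1/(2(ε + V_max)), then ρᵢ^{new} ≥ 0. -/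
/-- Roe-type upwind flux for the linear part: `V(x,u,w) = v(x) u + min{0,v(x)}(w-u)`. -/
def roeV (v : ℝ → ℝ) (x u w : ℝ) : ℝ := v x * u + min 0 (v x) * (w - u)

/-- Roe-type flux for the non-local part: `F(u,w,J) = J f(u) + min{0,J}(f(w)-f(u))`. -/
def roeF (f : ℝ → ℝ) (u w J : ℝ) : ℝ := J * f u + min 0 J * (f w - f u)

/-- Positivity of the one-step Roe-type update under the CFL condition
`λ ≤ 1/(2(ε + V_max))`. -/
theorem stmt_6 (ρ : ℤ → ℝ) (hρ : ∀ j, 0 ≤ ρ j)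
    (f : ℝ → ℝ) (hf0 : f 0 = 0) (hf : ∀ r, 0 ≤ r → 0 ≤ f r ∧ f r ≤ r)
    (v : ℝ → ℝ) (Vmax : ℝ) (hv : ∀ x, |v x| ≤ Vmax)
    (ε : ℝ) (hε : 0 < ε) (Jp Jm : ℝ) (hJp : |Jp| ≤ ε) (hJm : |Jm| ≤ ε)
    (lam : ℝ) (hlam : 0 < lam) (hCFL : lam ≤ 1 / (2 * (ε + Vmax)))
    (xp xm : ℝ) (i : ℤ) :
    0 ≤ ρ i - lam * (roeV v xp (ρ i) (ρ (i + 1)) + roeF f (ρ i) (ρ (i + 1)) Jp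
      - roeV v xm (ρ (i - 1)) (ρ i) - roeF f (ρ (i - 1)) (ρ i) Jm) := by
  have ha0 : 0 ≤ ρ (i - 1) := hρ _
  have hu0 : 0 ≤ ρ i := hρ _
  have hw0 : 0 ≤ ρ (i + 1) := hρ _
  set a := ρ (i - 1)
  set u := ρ i
  set w := ρ (i + 1)
  obtain ⟨hfa0, hfa1⟩ := hf a ha0
  obtain ⟨hfu0, hfu1⟩ := hf u hu0
  obtain ⟨hfw0, hfw1⟩ := hf w hw0
  have hVmax0 : 0 ≤ Vmax := (abs_nonneg _).trans (hv xp)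
  have hpos : 0 < 2 * (ε + Vmax) := by linarith
  have hCFL' : lam * (2 * (ε + Vmax)) ≤ 1 := by
    rw [le_div_iff₀ hpos] at hCFL; linarith
  have hvp := abs_le.mp (hv xp)
  have hvm := abs_le.mp (hv xm)
  have hJp' := abs_le.mp hJp
  have hJm' := abs_le.mp hJm
  -- bounds on min 0 x
  have mp_le : min 0 (v xp) ≤ 0 := min_le_left _ _
  have mm_le : min 0 (v xm) ≤ 0 := min_le_left _ _
  have np_le : min 0 Jp ≤ 0 := min_le_left _ _
  have nm_le : min 0 Jm ≤ 0 := min_le_left _ _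
  have mm_ge : -Vmax ≤ min 0 (v xm) := le_min (by linarith) hvm.1
  have nm_ge : -ε ≤ min 0 Jm := le_min (by linarith) hJm'.1
  -- x - min 0 x = max 0 x ∈ [0, bound]
  have hmaxp : v xp - min 0 (v xp) = max 0 (v xp) := by
    have := min_add_max (0 : ℝ) (v xp); linarith
  have hmaxm : v xm - min 0 (v xm) = max 0 (v xm) := by
    have := min_add_max (0 : ℝ) (v xm); linarith
  have hmaxJp : Jp - min 0 Jp = max 0 Jp := by
    have := min_add_max (0 : ℝ) Jp; linarith
  have hmaxJm : Jm - min 0 Jm = max 0 Jm := by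
    have := min_add_max (0 : ℝ) Jm; linarith
  have maxp_le : v xp - min 0 (v xp) ≤ Vmax := by rw [hmaxp]; exact max_le hVmax0 hvp.2
  have maxp_ge : 0 ≤ v xp - min 0 (v xp) := by rw [hmaxp]; exact le_max_left _ _
  have maxm_ge : 0 ≤ v xm - min 0 (v xm) := by rw [hmaxm]; exact le_max_left _ _
  have maxJp_le : Jp - min 0 Jp ≤ ε := by rw [hmaxJp]; exact max_le hε.le hJp'.2
  have maxJm_ge : 0 ≤ Jm - min 0 Jm := by rw [hmaxJm]; exact le_max_left _ _
  -- incoming fluxes are nonnegative contributions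
  have t1 : lam * (min 0 (v xp) * w) ≤ 0 :=
    mul_nonpos_of_nonneg_of_nonpos hlam.le (mul_nonpos_of_nonpos_of_nonneg mp_le hw0)
  have t2 : lam * (min 0 Jp * f w) ≤ 0 :=
    mul_nonpos_of_nonneg_of_nonpos hlam.le (mul_nonpos_of_nonpos_of_nonneg np_le hfw0)
  have t3 : 0 ≤ lam * ((v xm - min 0 (v xm)) * a) :=
    mul_nonneg hlam.le (mul_nonneg maxm_ge ha0)
  have t4 : 0 ≤ lam * ((Jm - min 0 Jm) * f a) :=
    mul_nonneg hlam.le (mul_nonneg maxJm_ge hfa0)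
  -- outgoing fluxes bounded by CFL
  have t5 : lam * ((v xp - min 0 (v xp)) * u) ≤ lam * (Vmax * u) :=
    mul_le_mul_of_nonneg_left (mul_le_mul_of_nonneg_right maxp_le hu0) hlam.le
  have t6 : lam * ((Jp - min 0 Jp) * f u) ≤ lam * (ε * u) := by
    have h1 : (Jp - min 0 Jp) * f u ≤ ε * f u := mul_le_mul_of_nonneg_right maxJp_le hfu0
    have h2 : ε * f u ≤ ε * u := mul_le_mul_of_nonneg_left hfu1 hε.le
    exact mul_le_mul_of_nonneg_left (h1.trans h2) hlam.le
  have t7 : lam * (-(min 0 (v xm)) * u) ≤ lam * (Vmax * u) :=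
    mul_le_mul_of_nonneg_left (mul_le_mul_of_nonneg_right (by linarith) hu0) hlam.le
  have t8 : lam * (-(min 0 Jm) * f u) ≤ lam * (ε * u) := by
    have h1 : -(min 0 Jm) * f u ≤ ε * f u :=
      mul_le_mul_of_nonneg_right (by linarith) hfu0
    have h2 : ε * f u ≤ ε * u := mul_le_mul_of_nonneg_left hfu1 hε.le
    exact mul_le_mul_of_nonneg_left (h1.trans h2) hlam.le
  have t9 : lam * (2 * (ε + Vmax)) * u ≤ u := by
    nlinarith [mul_le_mul_of_nonneg_right hCFL' hu0]
  simp only [roeV, roeF]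
  linarith [t1, t2, t3, t4, t5, t6, t7, t8, t9]
end

section
/- Let H(u,w) = v·u + min{0,v}(w-u) + J f(u) + min{0,J}(f(w)-f(u)) with f differentiable, f' ≥ 0, ‖f'‖_∞ = L_f, |J| ≤ ε, and let λ ≤ 1/(3(ε L_f + |v|)). Define for a sequence (ρᵢ) the quantity A_i = ρ_{i+1} - ρ_i - λ[H_{i+3/2}(ρ_{i+1}, ρ_{i+2}) - H_{i+3/2}(ρ_i, ρ_{i+1}) - H_{i+1/2}(ρ_i, ρ_{i+1}) + H_{i+1/2}(ρ_{i-1}, ρ_i)] where H_{k+1/2} denotes H with parameters (v_{k+1/2}, J_{k+1/2}) all satisfying the above bounds. Then A_i can be written as A_i = δ_{i+1}(ρ_{i+2}-ρ_{i+1}) + θ_i(ρ_i - ρ_{i-1}) + (1 - δ_i - θ_{i+1})(ρ_{i+1}-ρ_i) with δ_i, θ_i ∈ [0, 1/3], and consequently ∑_{i∈ℤ} |A_i| ≤ ∑_{i∈ℤ} |ρ_{i+1} - ρ_i| whenever the right side is finite. -/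
/-- Full Roe-type numerical flux `H(u,w) = v u + min{0,v}(w-u) + J f(u) + min{0,J}(f(w)-f(u))`. -/
def roeH (f : ℝ → ℝ) (v J u w : ℝ) : ℝ :=
  v * u + min 0 v * (w - u) + J * f u + min 0 J * (f w - f u)

lemma roeH_sub_right (f : ℝ → ℝ) (v J x y : ℝ) :
    roeH f v J x y - roeH f v J x x = min 0 v * (y - x) + min 0 J * (f y - f x) := by
  simp only [roeH]; ring

lemma roeH_sub_left (f : ℝ → ℝ) (v J x x' : ℝ) :
    roeH f v J x x - roeH f v J x' x
      = (v - min 0 v) * (x - x') + (J - min 0 J) * (f x - f x') := by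
  simp only [roeH]; ring

/-- Decomposition of the BV increment `A_i` into incremental coefficients
`δ_i, θ_i ∈ [0,1/3]`, and the resulting TV bound `∑|A_i| ≤ ∑|ρ_{i+1}-ρ_i|`. -/
theorem stmt_8 (f : ℝ → ℝ) (hf : Differentiable ℝ f)
    (Lf : ℝ) (hf' : ∀ r, 0 ≤ deriv f r) (hLf : ∀ r, deriv f r ≤ Lf)
    (ε Vmax : ℝ) (hε : 0 < ε)
    (v J : ℤ → ℝ) (hv : ∀ k, |v k| ≤ Vmax) (hJ : ∀ k, |J k| ≤ ε)
    (lam : ℝ) (hlam : 0 < lam) (hCFL : lam ≤ 1 / (3 * (ε * Lf + Vmax)))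
    (ρ : ℤ → ℝ) (hsum : Summable fun i => |ρ (i + 1) - ρ i|)
    (A : ℤ → ℝ)
    (hA : ∀ i, A i = ρ (i + 1) - ρ i
      - lam * (roeH f (v (i + 1)) (J (i + 1)) (ρ (i + 1)) (ρ (i + 2))
        - roeH f (v (i + 1)) (J (i + 1)) (ρ i) (ρ (i + 1))
        - roeH f (v i) (J i) (ρ i) (ρ (i + 1))
        + roeH f (v i) (J i) (ρ (i - 1)) (ρ i)))
    (δ θ : ℤ → ℝ)
    (hδ : ∀ i, δ i = if ρ (i + 1) = ρ i then 0 else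
      -lam * (roeH f (v i) (J i) (ρ i) (ρ (i + 1))
        - roeH f (v i) (J i) (ρ i) (ρ i)) / (ρ (i + 1) - ρ i))
    (hθ : ∀ i, θ i = if ρ i = ρ (i - 1) then 0 else
      lam * (roeH f (v i) (J i) (ρ i) (ρ i)
        - roeH f (v i) (J i) (ρ (i - 1)) (ρ i)) / (ρ i - ρ (i - 1))) :
    (∀ i, δ i ∈ Set.Icc (0 : ℝ) (1 / 3) ∧ θ i ∈ Set.Icc (0 : ℝ) (1 / 3)) ∧
    (∀ i, A i = δ (i + 1) * (ρ (i + 2) - ρ (i + 1)) + θ i * (ρ i - ρ (i - 1))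
      + (1 - δ i - θ (i + 1)) * (ρ (i + 1) - ρ i)) ∧
    (∑' i : ℤ, |A i|) ≤ ∑' i : ℤ, |ρ (i + 1) - ρ i| := by
  have hLf0 : 0 ≤ Lf := le_trans (hf' 0) (hLf 0)
  have hV0 : 0 ≤ Vmax := le_trans (abs_nonneg _) (hv 0)
  have hS0 : 0 ≤ ε * Lf + Vmax := by positivity
  have hSpos : 0 < ε * Lf + Vmax := by
    rcases hS0.lt_or_eq with h | h
    · exact h
    · exfalso
      rw [← h] at hCFL
      norm_num at hCFL
      linarith
  have hkey : lam * (ε * Lf + Vmax) ≤ 1 / 3 := by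
    have h3 : (0:ℝ) < 3 * (ε * Lf + Vmax) := by linarith
    have := (le_div_iff₀ h3).mp hCFL
    nlinarith
  -- slope bounds from MVT
  have hratio : ∀ x y : ℝ, x ≠ y →
      0 ≤ (f y - f x) / (y - x) ∧ (f y - f x) / (y - x) ≤ Lf := by
    have main : ∀ x y : ℝ, x < y →
        0 ≤ (f y - f x) / (y - x) ∧ (f y - f x) / (y - x) ≤ Lf := by
      intro x y hxy
      obtain ⟨c, _, hc⟩ := exists_hasDerivAt_eq_slope f (deriv f) hxy
        (hf.continuous.continuousOn) (fun z _ => (hf z).hasDerivAt)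
      rw [← hc]
      exact ⟨hf' c, hLf c⟩
    intro x y hxy
    rcases lt_or_gt_of_ne hxy with h | h
    · exact main x y h
    · have hmain := main y x h
      have heq : (f y - f x) / (y - x) = (f x - f y) / (x - y) := by
        rw [← neg_sub (f x) (f y), ← neg_sub x y, neg_div_neg_eq]
      rw [heq]
      exact hmain
  -- bounds on δ and θ
  have hδθ : ∀ i, δ i ∈ Set.Icc (0 : ℝ) (1 / 3) ∧ θ i ∈ Set.Icc (0 : ℝ) (1 / 3) := by
    intro i
    constructor
    · rw [hδ i]
      split_ifs with h
      · constructor <;> norm_num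
      · have hd : ρ (i + 1) - ρ i ≠ 0 := sub_ne_zero.mpr h
        have hr := hratio (ρ i) (ρ (i + 1)) (Ne.symm h)
        have hm1 : min 0 (v i) ≤ 0 := min_le_left _ _
        have hm2 : -Vmax ≤ min 0 (v i) :=
          le_min (by linarith) ((abs_le.mp (hv i)).1)
        have hn1 : min 0 (J i) ≤ 0 := min_le_left _ _
        have hn2 : -ε ≤ min 0 (J i) :=
          le_min (by linarith) ((abs_le.mp (hJ i)).1)
        have heq : -lam * (roeH f (v i) (J i) (ρ i) (ρ (i + 1))
            - roeH f (v i) (J i) (ρ i) (ρ i)) / (ρ (i + 1) - ρ i)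
            = lam * (-(min 0 (v i)) + (-(min 0 (J i)))
              * ((f (ρ (i + 1)) - f (ρ i)) / (ρ (i + 1) - ρ i))) := by
          rw [roeH_sub_right]
          field_simp
          ring
        rw [heq]
        set r := (f (ρ (i + 1)) - f (ρ i)) / (ρ (i + 1) - ρ i) with hrdef
        have hJr : (-(min 0 (J i))) * r ≤ ε * Lf :=
          mul_le_mul (by linarith) hr.2 hr.1 hε.le
        have hJr0 : 0 ≤ (-(min 0 (J i))) * r :=
          mul_nonneg (by linarith) hr.1
        constructor
        · exact mul_nonneg hlam.le (by linarith)
        · have h2 : lam * (-(min 0 (v i)) + (-(min 0 (J i))) * r)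
              ≤ lam * (Vmax + ε * Lf) :=
            mul_le_mul_of_nonneg_left (by linarith) hlam.le
          have h3 : lam * (Vmax + ε * Lf) = lam * (ε * Lf + Vmax) := by ring
          linarith
    · rw [hθ i]
      split_ifs with h
      · constructor <;> norm_num
      · have hd : ρ i - ρ (i - 1) ≠ 0 := sub_ne_zero.mpr h
        have hr := hratio (ρ (i - 1)) (ρ i) (Ne.symm h)
        have hm1 : 0 ≤ v i - min 0 (v i) := by
          have := min_le_right (0:ℝ) (v i); linarith
        have hm2 : v i - min 0 (v i) ≤ Vmax := by
          have h1 : min 0 (v i) + max 0 (v i) = 0 + v i := min_add_max 0 (v i)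
          have h2 : max 0 (v i) ≤ Vmax := max_le hV0 ((abs_le.mp (hv i)).2)
          linarith
        have hn1 : 0 ≤ J i - min 0 (J i) := by
          have := min_le_right (0:ℝ) (J i); linarith
        have hn2 : J i - min 0 (J i) ≤ ε := by
          have h1 : min 0 (J i) + max 0 (J i) = 0 + J i := min_add_max 0 (J i)
          have h2 : max 0 (J i) ≤ ε := max_le hε.le ((abs_le.mp (hJ i)).2)
          linarith
        have heq : lam * (roeH f (v i) (J i) (ρ i) (ρ i)
            - roeH f (v i) (J i) (ρ (i - 1)) (ρ i)) / (ρ i - ρ (i - 1))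
            = lam * ((v i - min 0 (v i)) + (J i - min 0 (J i))
              * ((f (ρ i) - f (ρ (i - 1))) / (ρ i - ρ (i - 1)))) := by
          rw [roeH_sub_left]
          field_simp
          try ring
        rw [heq]
        set r := (f (ρ i) - f (ρ (i - 1))) / (ρ i - ρ (i - 1)) with hrdef
        have hJr : (J i - min 0 (J i)) * r ≤ ε * Lf :=
          mul_le_mul hn2 hr.2 hr.1 hε.le
        have hJr0 : 0 ≤ (J i - min 0 (J i)) * r := mul_nonneg hn1 hr.1
        constructor
        · exact mul_nonneg hlam.le (by linarith)
        · have h2 : lam * ((v i - min 0 (v i)) + (J i - min 0 (J i)) * r)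
              ≤ lam * (Vmax + ε * Lf) :=
            mul_le_mul_of_nonneg_left (by linarith) hlam.le
          have h3 : lam * (Vmax + ε * Lf) = lam * (ε * Lf + Vmax) := by ring
          linarith
  -- multiplicative characterizations of δ and θ
  have hδmul : ∀ i, δ i * (ρ (i + 1) - ρ i)
      = -lam * (roeH f (v i) (J i) (ρ i) (ρ (i + 1))
          - roeH f (v i) (J i) (ρ i) (ρ i)) := by
    intro i
    rw [hδ i]
    split_ifs with h
    · rw [h]; simp
    · have hd : ρ (i + 1) - ρ i ≠ 0 := sub_ne_zero.mpr h
      field_simp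
  have hθmul : ∀ i, θ i * (ρ i - ρ (i - 1))
      = lam * (roeH f (v i) (J i) (ρ i) (ρ i)
          - roeH f (v i) (J i) (ρ (i - 1)) (ρ i)) := by
    intro i
    rw [hθ i]
    split_ifs with h
    · rw [h]; simp
    · have hd : ρ i - ρ (i - 1) ≠ 0 := sub_ne_zero.mpr h
      field_simp
  -- decomposition identity
  have hdecomp : ∀ i, A i = δ (i + 1) * (ρ (i + 2) - ρ (i + 1))
      + θ i * (ρ i - ρ (i - 1)) + (1 - δ i - θ (i + 1)) * (ρ (i + 1) - ρ i) := by
    intro i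
    have e2 : (i : ℤ) + 1 + 1 = i + 2 := by ring
    have e1 : (i : ℤ) + 1 - 1 = i := by ring
    have h1 := hδmul (i + 1)
    rw [e2] at h1
    have h2 := hθmul (i + 1)
    rw [e1] at h2
    have h3 := hδmul i
    have h4 := hθmul i
    rw [hA i]
    linarith [h1, h2, h3, h4]
  refine ⟨hδθ, hdecomp, ?_⟩
  -- the tsum bound
  obtain ⟨g, hg⟩ : ∃ g : ℤ → ℝ, ∀ i, g i = |ρ (i + 1) - ρ i| := ⟨_, fun _ => rfl⟩
  have hgfun : g = fun i => |ρ (i + 1) - ρ i| := funext hg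
  have hg0 : ∀ i, 0 ≤ g i := fun i => by rw [hg]; exact abs_nonneg _
  have hbound : ∀ i, |A i| ≤ δ (i + 1) * g (i + 1) + θ i * g (i - 1)
      + (1 - δ i - θ (i + 1)) * g i := by
    intro i
    have e2 : (i : ℤ) + 1 + 1 = i + 2 := by ring
    have e1 : (i : ℤ) - 1 + 1 = i := by ring
    have hg1 : g (i + 1) = |ρ (i + 2) - ρ (i + 1)| := by rw [hg (i + 1), e2]
    have hg2 : g (i - 1) = |ρ i - ρ (i - 1)| := by rw [hg (i - 1), e1]
    have hg3 : g i = |ρ (i + 1) - ρ i| := hg i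
    rw [hg3]
    rw [hdecomp i, hg1, hg2]
    have hc1 : 0 ≤ δ (i + 1) := (hδθ (i + 1)).1.1
    have hc2 : 0 ≤ θ i := (hδθ i).2.1
    have hc3 : 0 ≤ 1 - δ i - θ (i + 1) := by
      have := (hδθ i).1.2
      have := (hδθ (i + 1)).2.2
      linarith
    calc |δ (i + 1) * (ρ (i + 2) - ρ (i + 1)) + θ i * (ρ i - ρ (i - 1))
          + (1 - δ i - θ (i + 1)) * (ρ (i + 1) - ρ i)|
        ≤ |δ (i + 1) * (ρ (i + 2) - ρ (i + 1)) + θ i * (ρ i - ρ (i - 1))|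
          + |(1 - δ i - θ (i + 1)) * (ρ (i + 1) - ρ i)| := abs_add_le _ _
      _ ≤ |δ (i + 1) * (ρ (i + 2) - ρ (i + 1))| + |θ i * (ρ i - ρ (i - 1))|
          + |(1 - δ i - θ (i + 1)) * (ρ (i + 1) - ρ i)| := by
            have := abs_add_le (δ (i + 1) * (ρ (i + 2) - ρ (i + 1)))
              (θ i * (ρ i - ρ (i - 1)))
            linarith
      _ = δ (i + 1) * |ρ (i + 2) - ρ (i + 1)| + θ i * |ρ i - ρ (i - 1)|
          + (1 - δ i - θ (i + 1)) * |ρ (i + 1) - ρ i| := by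
            rw [abs_mul, abs_mul, abs_mul, abs_of_nonneg hc1, abs_of_nonneg hc2,
              abs_of_nonneg hc3]
  have hsg : Summable g := by rw [hgfun]; exact hsum
  have hgp1 : Summable (fun i : ℤ => g (i + 1)) :=
    (Equiv.addRight (1 : ℤ)).summable_iff.mpr hsg
  have hgm1 : Summable (fun i : ℤ => g (i - 1)) :=
    (Equiv.subRight (1 : ℤ)).summable_iff.mpr hsg
  have hcoef1 : ∀ i : ℤ, δ i ≤ 1 := fun i => le_trans (hδθ i).1.2 (by norm_num)
  have hcoef2 : ∀ i : ℤ, θ i ≤ 1 := fun i => le_trans (hδθ i).2.2 (by norm_num)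
  have ha : Summable (fun i : ℤ => δ (i + 1) * g (i + 1)) :=
    Summable.of_nonneg_of_le (fun i => mul_nonneg ((hδθ (i + 1)).1.1) (hg0 _))
      (fun i => mul_le_of_le_one_left (hg0 _) (hcoef1 _)) hgp1
  have hb : Summable (fun i : ℤ => θ i * g (i - 1)) :=
    Summable.of_nonneg_of_le (fun i => mul_nonneg ((hδθ i).2.1) (hg0 _))
      (fun i => mul_le_of_le_one_left (hg0 _) (hcoef2 _)) hgm1
  have hc : Summable (fun i : ℤ => (1 - δ i - θ (i + 1)) * g i) := by
    refine Summable.of_nonneg_of_le (fun i => ?_) (fun i => ?_) hsg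
    · exact mul_nonneg (by have := (hδθ i).1.2; have := (hδθ (i+1)).2.2; linarith)
        (hg0 _)
    · exact mul_le_of_le_one_left (hg0 _)
        (by have := (hδθ i).1.1; have := (hδθ (i+1)).2.1; linarith)
  have ha' : Summable (fun i : ℤ => δ i * g i) :=
    Summable.of_nonneg_of_le (fun i => mul_nonneg ((hδθ i).1.1) (hg0 _))
      (fun i => mul_le_of_le_one_left (hg0 _) (hcoef1 _)) hsg
  have hb' : Summable (fun i : ℤ => θ (i + 1) * g i) :=
    Summable.of_nonneg_of_le (fun i => mul_nonneg ((hδθ (i + 1)).2.1) (hg0 _))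
      (fun i => mul_le_of_le_one_left (hg0 _) (hcoef2 _)) hsg
  have hAsum : Summable (fun i : ℤ => |A i|) :=
    Summable.of_nonneg_of_le (fun i => abs_nonneg _) hbound ((ha.add hb).add hc)
  have step1 : (∑' i : ℤ, |A i|)
      ≤ ∑' i : ℤ, (δ (i + 1) * g (i + 1) + θ i * g (i - 1)
        + (1 - δ i - θ (i + 1)) * g i) :=
    Summable.tsum_le_tsum hbound hAsum ((ha.add hb).add hc)
  have step2 : (∑' i : ℤ, (δ (i + 1) * g (i + 1) + θ i * g (i - 1)
        + (1 - δ i - θ (i + 1)) * g i))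
      = (∑' i : ℤ, δ (i + 1) * g (i + 1)) + (∑' i : ℤ, θ i * g (i - 1))
        + (∑' i : ℤ, (1 - δ i - θ (i + 1)) * g i) := by
    rw [Summable.tsum_add (ha.add hb) hc, Summable.tsum_add ha hb]
  have step3 : (∑' i : ℤ, δ (i + 1) * g (i + 1)) = ∑' i : ℤ, δ i * g i := by
    exact (Equiv.addRight (1 : ℤ)).tsum_eq (fun i => δ i * g i)
  have step4 : (∑' i : ℤ, θ i * g (i - 1)) = ∑' i : ℤ, θ (i + 1) * g i := by
    have := (Equiv.subRight (1 : ℤ)).tsum_eq (fun i => θ (i + 1) * g i)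
    rw [← this]
    apply tsum_congr
    intro i
    simp only [Equiv.subRight_apply]
    congr 1
    · congr 1; ring
  have step5 : (∑' i : ℤ, δ i * g i) + (∑' i : ℤ, θ (i + 1) * g i)
      + (∑' i : ℤ, (1 - δ i - θ (i + 1)) * g i) = ∑' i : ℤ, g i := by
    rw [← Summable.tsum_add ha' hb', ← Summable.tsum_add (ha'.add hb') hc]
    apply tsum_congr
    intro i
    ring
  calc (∑' i : ℤ, |A i|)
      ≤ ∑' i : ℤ, (δ (i + 1) * g (i + 1) + θ i * g (i - 1)
        + (1 - δ i - θ (i + 1)) * g i) := step1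
    _ = (∑' i : ℤ, δ (i + 1) * g (i + 1)) + (∑' i : ℤ, θ i * g (i - 1))
        + (∑' i : ℤ, (1 - δ i - θ (i + 1)) * g i) := step2
    _ = (∑' i : ℤ, δ i * g i) + (∑' i : ℤ, θ (i + 1) * g i)
        + (∑' i : ℤ, (1 - δ i - θ (i + 1)) * g i) := by rw [step3, step4]
    _ = ∑' i : ℤ, g i := step5
    _ = ∑' i : ℤ, |ρ (i + 1) - ρ i| := tsum_congr hg
end

section
/- Let f : ℝ⁺ → ℝ⁺ satisfy f(r) ≤ r for all r ≥ 0 and f Lipschitz with constant L_f. In the Lax-Friedrichs flux F(x,u,w) = ½[v(x)(u+w) + J(x)(f(u)+f(w))] - (α/2)(w-u), if α ≥ ‖v‖_{L∞} + ε L_f, |J(x)| ≤ ε, u,w ≥ 0, and λ ≤ 1/(3α), then the one-step update ρᵢ^{new} = ρᵢ - λ[F(x_{i+1/2}, ρᵢ, ρ_{i+1}) - F(x_{i-1/2}, ρ_{i-1}, ρᵢ)] applied to a nonnegative sequence with v and J constant (v(x_{i+1/2}) = v(x_{i-1/2}) = v, J(x_{i+1/2}) = J(x_{i-1/2}) = J)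 yields ρᵢ^{new} ≥ 0. -/
/-- Lax-Friedrichs numerical flux with constant coefficients `v`, `J` and viscosity `α`:
`F(u,w) = ½[v(u+w) + J(f(u)+f(w))] - (α/2)(w-u)`. -/
noncomputable def lxfF (f : ℝ → ℝ) (v J α u w : ℝ) : ℝ :=
  (v * (u + w) + J * (f u + f w)) / 2 - α / 2 * (w - u)

/-- Positivity of the one-step Lax-Friedrichs update when
`α ≥ V_max + ε L_f` and `λ ≤ 1/(3α)`. -/
theorem stmt_15 (ρ : ℤ → ℝ) (hρ : ∀ j, 0 ≤ ρ j)
    (f : ℝ → ℝ) (hf0 : f 0 = 0) (hf : ∀ r, 0 ≤ r → 0 ≤ f r ∧ f r ≤ r)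
    (Lf : ℝ) (hfLip : ∀ a b : ℝ, |f a - f b| ≤ Lf * |a - b|)
    (v J Vmax ε : ℝ) (hv : |v| ≤ Vmax) (hε : 0 < ε) (hJ : |J| ≤ ε)
    (α : ℝ) (hα : Vmax + ε * Lf ≤ α)
    (lam : ℝ) (hlam : 0 < lam) (hCFL : lam ≤ 1 / (3 * α)) (i : ℤ) :
    0 ≤ ρ i - lam * (lxfF f v J α (ρ i) (ρ (i + 1))
      - lxfF f v J α (ρ (i - 1)) (ρ i)) := by
  set a := ρ (i - 1) with ha'
  set b := ρ i with hb'
  set c := ρ (i + 1) with hc'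
  have ha := hρ (i - 1)
  have hb := hρ i
  have hc := hρ (i + 1)
  rw [← ha', ← hb', ← hc'] at *
  have hLf : 0 ≤ Lf := by
    have h := hfLip 1 0
    have h2 := abs_nonneg (f 1 - f 0)
    simp at h
    linarith
  have hVmax : 0 ≤ Vmax := (abs_nonneg v).trans hv
  have hαpos : 0 < α := by
    by_contra h
    push_neg at h
    have h3 : 1 / (3 * α) ≤ 0 := one_div_nonpos.mpr (by linarith)
    linarith
  have h1 : lam * (3 * α) ≤ 1 := (le_div_iff₀ (by positivity)).mp hCFL
  have h6 : lam * α ≤ 1 := by nlinarith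
  have hv' := abs_le.mp hv
  have hJt : |J * (f a - f c)| ≤ ε * Lf * (a + c) := by
    rw [abs_mul]
    have h2 : |f a - f c| ≤ Lf * |a - c| := hfLip a c
    have h3 : |a - c| ≤ a + c := by
      rw [abs_sub_le_iff]; constructor <;> linarith
    calc |J| * |f a - f c| ≤ ε * (Lf * (a + c)) := by
          apply mul_le_mul hJ (h2.trans (by nlinarith)) (abs_nonneg _) hε.le
      _ = ε * Lf * (a + c) := by ring
  have hJt' := (abs_le.mp hJt).1
  have h7 : lam * (-(ε * Lf * (a + c))) ≤ lam * (J * (f a - f c)) :=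
    mul_le_mul_of_nonneg_left hJt' hlam.le
  have h4 : 0 ≤ lam * ((α - v - ε * Lf) * c) :=
    mul_nonneg hlam.le (mul_nonneg (by linarith) hc)
  have h5 : 0 ≤ lam * ((α + v - ε * Lf) * a) :=
    mul_nonneg hlam.le (mul_nonneg (by linarith) ha)
  have h8 : 0 ≤ b * (1 - lam * α) := mul_nonneg hb (by linarith)
  simp only [lxfF]
  nlinarith [h4, h5, h7, h8]
end

section
/- Let η ∈ C³ ∩ W^{3,∞}(ℝ²) and ρ ∈ L¹(ℝ²). With J₁ as the first component of I(ρ) = -ε ∇(η*ρ)/√(1+‖∇(η*ρ)‖²), the mixed second difference satisfies |J₁(x₊,y) - J₁(x₊,y') - J₁(x₋,y) + J₁(x₋,y')| ≤ 2 ε Δx Δy (2‖∇³η‖_{L∞} ‖ρ‖_{L¹} + 3‖∇²η‖²_{L∞} ‖ρ‖²_{L¹}) whenever |x₊ - x₋| = Δx and |y - y'| = Δy. -/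
open MeasureTheory

noncomputable section Stmt17Aux

/-- denominator -/
def den (x y : ℝ) : ℝ := (1+x^2+y^2) * Real.sqrt (1+x^2+y^2)

def phi (x y : ℝ) : ℝ := x / Real.sqrt (1+x^2+y^2)
def phia (x y : ℝ) : ℝ := (1+y^2) / den x y
def phib (x y : ℝ) : ℝ := -(x*y) / den x y

lemma upos (x y : ℝ) : (0:ℝ) < 1+x^2+y^2 := by positivity

lemma sqrt_sq (x y : ℝ) : Real.sqrt (1+x^2+y^2) ^ 2 = 1+x^2+y^2 :=
  Real.sq_sqrt (upos x y).le

lemma sqrt_pos' (x y : ℝ) : 0 < Real.sqrt (1+x^2+y^2) :=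
  Real.sqrt_pos.2 (upos x y)

lemma one_le_sqrt (x y : ℝ) : 1 ≤ Real.sqrt (1+x^2+y^2) := by
  have := Real.sqrt_le_sqrt (show (1:ℝ) ≤ 1+x^2+y^2 by nlinarith [sq_nonneg x, sq_nonneg y])
  simpa using this

lemma den_pos (x y : ℝ) : 0 < den x y := mul_pos (upos x y) (sqrt_pos' x y)

lemma phia_abs_le (x y : ℝ) : |phia x y| ≤ 1 := by
  rw [phia, abs_div, abs_of_nonneg (by positivity : (0:ℝ) ≤ 1+y^2),
    abs_of_pos (den_pos x y), div_le_one (den_pos x y), den]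
  nlinarith [one_le_sqrt x y, sq_nonneg x, upos x y]

lemma phib_abs_le (x y : ℝ) : |phib x y| ≤ 1 := by
  rw [phib, abs_div, abs_of_pos (den_pos x y), div_le_one (den_pos x y), den, abs_neg, abs_mul]
  nlinarith [one_le_sqrt x y, sq_nonneg (|x|-|y|), abs_nonneg x, abs_nonneg y,
    sq_abs x, sq_abs y, upos x y]

lemma le_of_sq_le' {a b : ℝ} (ha : 0 ≤ a) (hb : 0 ≤ b) (h : a^2 ≤ b^2) : a ≤ b := by nlinarith

lemma mvt_global {f f' : ℝ → ℝ} (hf : ∀ t, HasDerivAt f (f' t) t) {C : ℝ}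
    (hC : ∀ t, |f' t| ≤ C) (a b : ℝ) : |f b - f a| ≤ C * |b - a| := by
  have := Convex.norm_image_sub_le_of_norm_hasDerivWithin_le (s := Set.univ) (f := f) (f' := f')
    (fun t _ => (hf t).hasDerivWithinAt) (fun t _ => by simpa [Real.norm_eq_abs] using hC t)
    convex_univ (Set.mem_univ a) (Set.mem_univ b)
  simpa [Real.norm_eq_abs] using this

lemma hasDerivAt_den_x (y x : ℝ) :
    HasDerivAt (fun x => den x y) (3*x*Real.sqrt (1+x^2+y^2)) x := by
  have hu : HasDerivAt (fun x : ℝ => 1+x^2+y^2) (2*x) x := by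
    simpa using (((hasDerivAt_pow 2 x).const_add 1).add_const (y^2))
  have hs : HasDerivAt (fun x : ℝ => Real.sqrt (1+x^2+y^2)) (2*x/(2*Real.sqrt (1+x^2+y^2))) x :=
    hu.sqrt (upos x y).ne'
  have := hu.mul hs
  refine this.congr_deriv ?_
  have h1 := sqrt_sq x y
  have h2 := (sqrt_pos' x y).ne'
  have h3 : (1+x^2+y^2)*(2*x/(2*Real.sqrt (1+x^2+y^2))) = x * Real.sqrt (1+x^2+y^2) := by
    rw [mul_div_assoc', div_eq_iff (mul_ne_zero two_ne_zero h2)]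
    linear_combination (-2*x) * h1
  rw [h3]; ring

lemma I1 (s t : ℝ) (hs : 0 ≤ s) (ht : 0 ≤ t) : 4*s*(1+t)^2 ≤ (1+s+t)^5 := by
  nlinarith [sq_nonneg (1-s), sq_nonneg (s+t), sq_nonneg (s*t), mul_nonneg hs ht,
    sq_nonneg (1+s+t), pow_le_pow_right₀ (by linarith : (1:ℝ) ≤ 1+s+t) (by norm_num : 4 ≤ 5)]

lemma I2 (s t : ℝ) (hs : 0 ≤ s) (ht : 0 ≤ t) : t*(2*s-t-1)^2 ≤ (9/4)*(1+s+t)^5 := by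
  nlinarith [mul_nonneg hs ht, sq_nonneg (s-t), sq_nonneg (s+t), sq_nonneg (2*s-t-1),
    mul_nonneg (mul_nonneg hs hs) ht, mul_nonneg (mul_nonneg ht ht) hs, sq_nonneg (1+s+t),
    pow_le_pow_right₀ (by linarith : (1:ℝ) ≤ 1+s+t) (by norm_num : 3 ≤ 5)]

lemma phia_lipx (y a b : ℝ) : |phia a y - phia b y| ≤ (3/2) * |a - b| := by
  apply mvt_global (f := fun x => phia x y)
    (f' := fun x => (0 * den x y - (1+y^2) * (3*x*Real.sqrt (1+x^2+y^2))) / den x y ^ 2)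
  · intro x
    exact (hasDerivAt_const x ((1:ℝ)+y^2)).div (hasDerivAt_den_x y x) (den_pos x y).ne'
  · intro x
    have h1 : Real.sqrt (1+x^2+y^2)^2 = 1+x^2+y^2 := sqrt_sq x y
    have h4 : Real.sqrt (1+x^2+y^2)^4 = (1+x^2+y^2)^2 := by
      rw [show (4:ℕ)=2*2 from rfl, pow_mul, h1]
    have hS0 : 0 < Real.sqrt (1+x^2+y^2) := sqrt_pos' x y
    rw [abs_div, abs_of_pos (pow_pos (den_pos x y) 2), div_le_iff₀ (pow_pos (den_pos x y) 2)]
    apply le_of_sq_le' (abs_nonneg _) (by positivity)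
    rw [sq_abs, den]
    have key := mul_le_mul_of_nonneg_left (I1 (x^2) (y^2) (sq_nonneg x) (sq_nonneg y))
      (show (0:ℝ) ≤ (9/4)*(1+x^2+y^2) by positivity)
    have e1 : (0 * ((1+x^2+y^2) * Real.sqrt (1+x^2+y^2)) - (1+y^2)*(3*x*Real.sqrt (1+x^2+y^2)))^2
        = 9/4*(1+x^2+y^2) * (4*x^2*(1+y^2)^2) := by
      linear_combination (9*x^2*(1+y^2)^2) * h1
    have e2 : (3/2 * ((1+x^2+y^2) * Real.sqrt (1+x^2+y^2))^2)^2
        = 9/4*(1+x^2+y^2) * (1+x^2+y^2)^5 := by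
      linear_combination (9/4*(1+x^2+y^2)^4) * h4
    rw [e1, e2]
    exact key

lemma den_comm (x y : ℝ) : den x y = den y x := by unfold den; ring_nf

lemma hasDerivAt_den_y (x y : ℝ) :
    HasDerivAt (fun y => den x y) (3*y*Real.sqrt (1+x^2+y^2)) y := by
  have h := hasDerivAt_den_x x y
  have e1 : (fun z => den z x) = fun z => den x z := funext fun z => den_comm z x
  rw [e1] at h
  rw [show (1:ℝ)+x^2+y^2 = 1+y^2+x^2 by ring]
  exact h

lemma phia_lipy (x a b : ℝ) : |phia x a - phia x b| ≤ (3/2) * |a - b| := by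
  apply mvt_global (f := fun y => phia x y)
    (f' := fun y => (2*y * den x y - (1+y^2) * (3*y*Real.sqrt (1+x^2+y^2))) / den x y ^ 2)
  · intro z
    have hnum : HasDerivAt (fun y : ℝ => 1+y^2) (2*z) z := by
      simpa using (hasDerivAt_pow 2 z).const_add 1
    exact hnum.div (hasDerivAt_den_y x z) (den_pos x z).ne'
  · intro z
    have h1 : Real.sqrt (1+x^2+z^2)^2 = 1+x^2+z^2 := sqrt_sq x z
    have h4 : Real.sqrt (1+x^2+z^2)^4 = (1+x^2+z^2)^2 := by
      rw [show (4:ℕ)=2*2 from rfl, pow_mul, h1]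
    have hS0 : 0 < Real.sqrt (1+x^2+z^2) := sqrt_pos' x z
    rw [abs_div, abs_of_pos (pow_pos (den_pos x z) 2), div_le_iff₀ (pow_pos (den_pos x z) 2)]
    apply le_of_sq_le' (abs_nonneg _) (by positivity)
    rw [sq_abs, den]
    have key := mul_le_mul_of_nonneg_left (I2 (x^2) (z^2) (sq_nonneg x) (sq_nonneg z))
      (show (0:ℝ) ≤ (1+x^2+z^2) by positivity)
    have e1 : (2*z * ((1+x^2+z^2) * Real.sqrt (1+x^2+z^2)) - (1+z^2)*(3*z*Real.sqrt (1+x^2+z^2)))^2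
        = (1+x^2+z^2) * (z^2*(2*x^2-z^2-1)^2) := by
      linear_combination ((2*z*(1+x^2+z^2) - 3*z*(1+z^2))^2) * h1
    have e2 : (3/2 * ((1+x^2+z^2) * Real.sqrt (1+x^2+z^2))^2)^2
        = (1+x^2+z^2) * (9/4*(1+x^2+z^2)^5) := by
      linear_combination (9/4*(1+x^2+z^2)^4) * h4
    rw [e1, e2]
    exact key

lemma phib_lipx (y a b : ℝ) : |phib a y - phib b y| ≤ (3/2) * |a - b| := by
  apply mvt_global (f := fun x => phib x y)
    (f' := fun x => (-y * den x y - (-(x*y)) * (3*x*Real.sqrt (1+x^2+y^2))) / den x y ^ 2)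
  · intro x
    have hnum : HasDerivAt (fun x : ℝ => -(x*y)) (-y) x := by
      exact (hasDerivAt_mul_const y (x := x)).neg
    exact hnum.div (hasDerivAt_den_x y x) (den_pos x y).ne'
  · intro x
    have h1 : Real.sqrt (1+x^2+y^2)^2 = 1+x^2+y^2 := sqrt_sq x y
    have h4 : Real.sqrt (1+x^2+y^2)^4 = (1+x^2+y^2)^2 := by
      rw [show (4:ℕ)=2*2 from rfl, pow_mul, h1]
    have hS0 : 0 < Real.sqrt (1+x^2+y^2) := sqrt_pos' x y
    rw [abs_div, abs_of_pos (pow_pos (den_pos x y) 2), div_le_iff₀ (pow_pos (den_pos x y) 2)]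
    apply le_of_sq_le' (abs_nonneg _) (by positivity)
    rw [sq_abs, den]
    have key := mul_le_mul_of_nonneg_left (I2 (x^2) (y^2) (sq_nonneg x) (sq_nonneg y))
      (show (0:ℝ) ≤ (1+x^2+y^2) by positivity)
    have e1 : (-y * ((1+x^2+y^2) * Real.sqrt (1+x^2+y^2)) - -(x*y)*(3*x*Real.sqrt (1+x^2+y^2)))^2
        = (1+x^2+y^2) * (y^2*(2*x^2-y^2-1)^2) := by
      linear_combination ((-y*(1+x^2+y^2) + 3*x^2*y)^2) * h1
    have e2 : (3/2 * ((1+x^2+y^2) * Real.sqrt (1+x^2+y^2))^2)^2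
        = (1+x^2+y^2) * (9/4*(1+x^2+y^2)^5) := by
      linear_combination (9/4*(1+x^2+y^2)^4) * h4
    rw [e1, e2]
    exact key

lemma phib_comm (x y : ℝ) : phib x y = phib y x := by unfold phib den; ring_nf

lemma phib_lipy (x a b : ℝ) : |phib x a - phib x b| ≤ (3/2) * |a - b| := by
  rw [phib_comm x a, phib_comm x b]; exact phib_lipx x a b

lemma phia_diff (x1 y1 x2 y2 : ℝ) :
    |phia x1 y1 - phia x2 y2| ≤ (3/2) * (|x1-x2| + |y1-y2|) := by
  calc |phia x1 y1 - phia x2 y2|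
      ≤ |phia x1 y1 - phia x2 y1| + |phia x2 y1 - phia x2 y2| := abs_sub_le _ _ _
    _ ≤ (3/2)*|x1-x2| + (3/2)*|y1-y2| := add_le_add (phia_lipx y1 x1 x2) (phia_lipy x2 y1 y2)
    _ = (3/2) * (|x1-x2| + |y1-y2|) := by ring

lemma phib_diff (x1 y1 x2 y2 : ℝ) :
    |phib x1 y1 - phib x2 y2| ≤ (3/2) * (|x1-x2| + |y1-y2|) := by
  calc |phib x1 y1 - phib x2 y2|
      ≤ |phib x1 y1 - phib x2 y1| + |phib x2 y1 - phib x2 y2| := abs_sub_le _ _ _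
    _ ≤ (3/2)*|x1-x2| + (3/2)*|y1-y2| := add_le_add (phib_lipx y1 x1 x2) (phib_lipy x2 y1 y2)
    _ = (3/2) * (|x1-x2| + |y1-y2|) := by ring

lemma phi_line_aux (x z v1 v2 : ℝ) :
    phia x z * v1 + phib x z * v2 =
    (v1 * Real.sqrt (1+x^2+z^2) - x*((2*x*v1+2*z*v2)/(2*Real.sqrt (1+x^2+z^2))))
      / Real.sqrt (1+x^2+z^2)^2 := by
  have h1 := sqrt_sq x z
  have h2 := (sqrt_pos' x z).ne'
  rw [phia, phib, den]
  field_simp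
  ring_nf
  have h3 : Real.sqrt (1+z^2+x^2)^3 = (1+z^2+x^2) * Real.sqrt (1+z^2+x^2) := by
    rw [pow_succ, Real.sq_sqrt (by positivity : (0:ℝ) ≤ 1+z^2+x^2)]
  rw [h1]
  ring

lemma phi_line (b1 v1 b2 v2 t : ℝ) :
    HasDerivAt (fun t => phi (b1 + v1*t) (b2 + v2*t))
      (phia (b1+v1*t) (b2+v2*t) * v1 + phib (b1+v1*t) (b2+v2*t) * v2) t := by
  have hN : HasDerivAt (fun t : ℝ => b1 + v1*t) v1 t := by
    simpa using ((hasDerivAt_id t).const_mul v1).const_add b1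
  have hM : HasDerivAt (fun t : ℝ => b2 + v2*t) v2 t := by
    simpa using ((hasDerivAt_id t).const_mul v2).const_add b2
  have hu : HasDerivAt (fun t : ℝ => 1 + (b1+v1*t)^2 + (b2+v2*t)^2)
      (2*(b1+v1*t)*v1 + 2*(b2+v2*t)*v2) t := by
    have := ((hN.pow 2).const_add 1).add (hM.pow 2)
    exact this.congr_deriv (by ring)
  have hs : HasDerivAt (fun t : ℝ => Real.sqrt (1 + (b1+v1*t)^2 + (b2+v2*t)^2))
      ((2*(b1+v1*t)*v1 + 2*(b2+v2*t)*v2)/(2*Real.sqrt (1+(b1+v1*t)^2+(b2+v2*t)^2))) t :=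
    hu.sqrt (upos _ _).ne'
  have hdiv := hN.div hs (sqrt_pos' (b1+v1*t) (b2+v2*t)).ne'
  exact hdiv.congr_deriv (phi_line_aux (b1+v1*t) (b2+v2*t) v1 v2).symm

lemma mvt_Icc {f f' : ℝ → ℝ} (hf : ∀ t, HasDerivAt f (f' t) t) {C : ℝ}
    (hC : ∀ t ∈ Set.Icc (0:ℝ) 1, |f' t| ≤ C) : |f 1 - f 0| ≤ C := by
  have := Convex.norm_image_sub_le_of_norm_hasDerivWithin_le (s := Set.Icc (0:ℝ) 1)
    (f := f) (f' := f') (fun t _ => (hf t).hasDerivWithinAt)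
    (fun t ht => by simpa [Real.norm_eq_abs] using hC t ht) (convex_Icc 0 1)
    (Set.mem_Icc.2 ⟨le_refl 0, zero_le_one⟩) (Set.mem_Icc.2 ⟨zero_le_one, le_refl 1⟩)
  simpa [Real.norm_eq_abs] using this

lemma landau {ψ ψ' : ℝ → ℝ} (hd : ∀ t, HasDerivAt ψ (ψ' t) t) (hpos : ∀ t, 0 ≤ ψ t)
    {B : ℝ} (hB : 0 < B) (hlip : ∀ s t, |ψ' s - ψ' t| ≤ B * |s - t|) : |ψ' 0| ≤ ψ 0 + B := by
  have hcont : Continuous ψ := by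
    have : Differentiable ℝ ψ := fun t => (hd t).differentiableAt
    exact this.continuous
  have taylor : ∀ t : ℝ, 0 ≤ ψ 0 + ψ' 0 * t + B * t^2 := by
    intro t
    rcases lt_trichotomy t 0 with ht | ht | ht
    · obtain ⟨c, hc, hceq⟩ := exists_hasDerivAt_eq_slope ψ ψ' ht hcont.continuousOn
        (fun x _ => hd x)
      rw [eq_div_iff (by linarith : (0:ℝ) - t ≠ 0)] at hceq
      have hpsit : ψ t = ψ 0 + ψ' c * t := by linear_combination hceq
      have hlc : -(B * |c|) ≤ ψ' c - ψ' 0 := by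
        have := (abs_le.1 (hlip c 0)).1
        simpa using this
      have habs : |c| ≤ -t := by
        rw [abs_of_neg hc.2]
        linarith [hc.1]
      have k1 : (ψ' c - ψ' 0) * t ≤ (-(B * |c|)) * t := mul_le_mul_of_nonpos_right hlc ht.le
      have k2 : B * (-t) * |c| ≤ B * (-t) * (-t) :=
        mul_le_mul_of_nonneg_left habs (mul_nonneg hB.le (by linarith))
      nlinarith [hpos t, hpsit, k1, k2]
    · subst ht; simpa using hpos 0
    · obtain ⟨c, hc, hceq⟩ := exists_hasDerivAt_eq_slope ψ ψ' ht hcont.continuousOn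
        (fun x _ => hd x)
      rw [eq_div_iff (by linarith : t - 0 ≠ 0)] at hceq
      have hpsit : ψ t = ψ 0 + ψ' c * t := by linear_combination -hceq
      have hlc : ψ' c - ψ' 0 ≤ B * |c| := by
        have := (abs_le.1 (hlip c 0)).2
        simpa using this
      have habs : |c| ≤ t := by
        rw [abs_of_pos hc.1]
        linarith [hc.2]
      have k1 : (ψ' c - ψ' 0) * t ≤ (B * |c|) * t := mul_le_mul_of_nonneg_right hlc ht.le
      have k2 : B * t * |c| ≤ B * t * t :=
        mul_le_mul_of_nonneg_left habs (mul_nonneg hB.le ht.le)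
      nlinarith [hpos t, hpsit, k1, k2]
  have h2 : (ψ' 0)^2 ≤ 4*B*ψ 0 := by
    have hkey := taylor (-(ψ' 0)/(2*B))
    have hB' : B ≠ 0 := hB.ne'
    field_simp at hkey
    nlinarith [hkey, hB, mul_pos hB hB]
  nlinarith [sq_abs (ψ' 0), hpos 0, sq_nonneg (ψ 0 - B), abs_nonneg (ψ' 0), h2, hB]

end Stmt17Aux

set_option maxHeartbeats 1000000 in
set_option synthInstance.maxHeartbeats 400000 in
open MeasureTheory in
/-- For `η ∈ C³ ∩ W^{3,∞}(ℝ²)` nonnegative and `ρ ∈ L¹(ℝ²)`, with `J₁` the first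
component of `I(ρ) = -ε ∇(η*ρ)/√(1+‖∇(η*ρ)‖²)`, the mixed second difference satisfies
`|J₁(xp,y) - J₁(xp,y') - J₁(xm,y) + J₁(xm,y')| ≤
  2 ε Δx Δy (2‖∇³η‖ ‖ρ‖₁ + 3‖∇²η‖² ‖ρ‖₁²)` when `|xp - xm| = Δx`, `|y - y'| = Δy`. -/
theorem stmt_17 (ε : ℝ) (hε : 0 < ε)
    (η ρ : ℝ × ℝ → ℝ) (hη : ContDiff ℝ 3 η) (hηpos : ∀ p, 0 ≤ η p)
    (M2 M3 : ℝ)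
    (hM2 : ∀ p, ‖iteratedFDeriv ℝ 2 η p‖ ≤ M2)
    (hM3 : ∀ p, ‖iteratedFDeriv ℝ 3 η p‖ ≤ M3)
    (hρ : Integrable ρ)
    (conv : ℝ → ℝ → ℝ)
    (hconv : ∀ x y, conv x y = ∫ p : ℝ × ℝ, η (x - p.1, y - p.2) * ρ p)
    (d1 d2 : ℝ → ℝ → ℝ)
    (hd1 : ∀ x y, d1 x y = deriv (fun t => conv t y) x)
    (hd2 : ∀ x y, d2 x y = deriv (fun t => conv x t) y)
    (J₁ : ℝ → ℝ → ℝ)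
    (hJ₁ : ∀ x y, J₁ x y =
      -(ε * d1 x y / Real.sqrt (1 + (d1 x y) ^ 2 + (d2 x y) ^ 2)))
    (xp xm y y' Δx Δy : ℝ)
    (hΔx : |xp - xm| = Δx) (hΔy : |y - y'| = Δy) :
    |J₁ xp y - J₁ xp y' - J₁ xm y + J₁ xm y'| ≤
      2 * ε * Δx * Δy *
        (2 * M3 * (∫ p, |ρ p|) + 3 * M2 ^ 2 * (∫ p, |ρ p|) ^ 2) := by
  have hR0 : (0:ℝ) ≤ ∫ p, |ρ p| := integral_nonneg fun p => abs_nonneg _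
  have hM2n : 0 ≤ M2 := le_trans (norm_nonneg _) (hM2 0)
  have hM3n : 0 ≤ M3 := le_trans (norm_nonneg _) (hM3 0)
  have hΔx0 : 0 ≤ Δx := hΔx ▸ abs_nonneg _
  have hΔy0 : 0 ≤ Δy := hΔy ▸ abs_nonneg _
  have hRHS0 : 0 ≤ 2 * ε * Δx * Δy *
      (2 * M3 * (∫ p, |ρ p|) + 3 * M2 ^ 2 * (∫ p, |ρ p|) ^ 2) := by positivity
  by_cases H : ∃ x₀ y₀ : ℝ, Integrable (fun p : ℝ × ℝ => η (x₀ - p.1, y₀ - p.2) * ρ p)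
  case neg =>
    push_neg at H
    have hc0 : ∀ x y, conv x y = 0 := fun x y => by
      rw [hconv]; exact integral_undef (H x y)
    have hd10 : ∀ x y, d1 x y = 0 := by
      intro x y
      rw [hd1]
      have : (fun t => conv t y) = fun _ => (0:ℝ) := funext fun t => hc0 t y
      rw [this, deriv_const]
    have hd20 : ∀ x y, d2 x y = 0 := by
      intro x y
      rw [hd2]
      have : (fun t => conv x t) = fun _ => (0:ℝ) := funext fun t => hc0 x t
      rw [this, deriv_const]
    have hJ0 : ∀ x y, J₁ x y = 0 := by
      intro x y; rw [hJ₁, hd10, hd20]; simp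
    simp only [hJ0]
    simpa using hRHS0
  case pos =>
    obtain ⟨x₀, y₀, h₀⟩ := H
    set R : ℝ := ∫ p, |ρ p| with hRdef
    set B : ℝ := M2 + 1 with hBdef
    have hBpos : 0 < B := by rw [hBdef]; linarith
    have hη1 : Differentiable ℝ η := hη.differentiable (by norm_num)
    have hF1c : ContDiff ℝ 2 (fderiv ℝ η) := hη.fderiv_right (by norm_num)
    have hF1d : Differentiable ℝ (fderiv ℝ η) := hF1c.differentiable (by norm_num)
    have hF2c : ContDiff ℝ 1 (fderiv ℝ (fderiv ℝ η)) := hF1c.fderiv_right (by norm_num)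
    have hF2d : Differentiable ℝ (fderiv ℝ (fderiv ℝ η)) := hF2c.differentiable (by norm_num)
    have hF2norm : ∀ z, ‖fderiv ℝ (fderiv ℝ η) z‖ ≤ M2 := by
      intro z
      have h1 : ‖iteratedFDeriv ℝ 1 (fderiv ℝ η) z‖ = ‖iteratedFDeriv ℝ 2 η z‖ :=
        norm_iteratedFDeriv_fderiv (n := 1)
      refine ContinuousLinearMap.opNorm_le_bound _ hM2n fun w => ?_
      have h2 : fderiv ℝ (fderiv ℝ η) z w = iteratedFDeriv ℝ 1 (fderiv ℝ η) z ![w] := by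
        rw [iteratedFDeriv_one_apply]
        simp
      rw [h2]
      calc ‖iteratedFDeriv ℝ 1 (fderiv ℝ η) z ![w]‖
          ≤ ‖iteratedFDeriv ℝ 1 (fderiv ℝ η) z‖ * ∏ i, ‖(![w] : Fin 1 → ℝ × ℝ) i‖ :=
            ContinuousMultilinearMap.le_opNorm _ _
        _ = ‖iteratedFDeriv ℝ 2 η z‖ * ‖w‖ := by rw [h1]; simp
        _ ≤ M2 * ‖w‖ := mul_le_mul_of_nonneg_right (hM2 z) (norm_nonneg w)
    letI : NormedAddCommGroup ((ℝ × ℝ) →L[ℝ] (ℝ × ℝ) →L[ℝ] ℝ) := inferInstance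
    letI : NormedSpace ℝ ((ℝ × ℝ) →L[ℝ] (ℝ × ℝ) →L[ℝ] ℝ) := inferInstance
    have hF3norm : ∀ z, ‖fderiv ℝ (fderiv ℝ (fderiv ℝ η)) z‖ ≤ M3 := by
      intro z
      have h1 : ‖iteratedFDeriv ℝ 1 (fderiv ℝ (fderiv ℝ η)) z‖ = ‖iteratedFDeriv ℝ 3 η z‖ := by
        rw [norm_iteratedFDeriv_fderiv (n := 1), norm_iteratedFDeriv_fderiv (n := 2)]
      refine ContinuousLinearMap.opNorm_le_bound _ hM3n fun w => ?_
      have h2 : fderiv ℝ (fderiv ℝ (fderiv ℝ η)) z w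
          = iteratedFDeriv ℝ 1 (fderiv ℝ (fderiv ℝ η)) z ![w] := by
        rw [iteratedFDeriv_one_apply]
        simp
      rw [h2]
      calc ‖iteratedFDeriv ℝ 1 (fderiv ℝ (fderiv ℝ η)) z ![w]‖
          ≤ ‖iteratedFDeriv ℝ 1 (fderiv ℝ (fderiv ℝ η)) z‖ * ∏ i, ‖(![w] : Fin 1 → ℝ × ℝ) i‖ :=
            ContinuousMultilinearMap.le_opNorm _ _
        _ = ‖iteratedFDeriv ℝ 3 η z‖ * ‖w‖ := by rw [h1]; simp
        _ ≤ M3 * ‖w‖ := mul_le_mul_of_nonneg_right (hM3 z) (norm_nonneg w)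
    have lipF1 : ∀ z w : ℝ × ℝ, ‖fderiv ℝ η z - fderiv ℝ η w‖ ≤ M2 * ‖z - w‖ := by
      intro z w
      exact Convex.norm_image_sub_le_of_norm_fderiv_le (fun u _ => hF1d u)
        (fun u _ => hF2norm u) convex_univ (Set.mem_univ w) (Set.mem_univ z)
    have lipF2 : ∀ z w : ℝ × ℝ,
        ‖fderiv ℝ (fderiv ℝ η) z - fderiv ℝ (fderiv ℝ η) w‖ ≤ M3 * ‖z - w‖ := by
      intro z w
      exact Convex.norm_image_sub_le_of_norm_fderiv_le (fun u _ => hF2d u)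
        (fun u _ => hF3norm u) convex_univ (Set.mem_univ w) (Set.mem_univ z)
    have he1 : ‖((1,0) : ℝ × ℝ)‖ = 1 := by
      simp [Prod.norm_def]
    have he2 : ‖((0,1) : ℝ × ℝ)‖ = 1 := by
      simp [Prod.norm_def]
    have hnormmk : ∀ a b : ℝ, ‖((a,b) : ℝ × ℝ)‖ = max |a| |b| := by
      intro a b
      simp [Prod.norm_def, Real.norm_eq_abs]
    have happly : ∀ (L : (ℝ × ℝ) →L[ℝ] ℝ) (w : ℝ × ℝ),
        L w = w.1 * L (1,0) + w.2 * L (0,1) := by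
      intro L w
      have hw : w = w.1 • ((1,0) : ℝ × ℝ) + w.2 • ((0,1) : ℝ × ℝ) := by
        ext <;> simp
      calc L w = L (w.1 • ((1,0) : ℝ × ℝ) + w.2 • ((0,1) : ℝ × ℝ)) := by rw [← hw]
        _ = w.1 * L (1,0) + w.2 * L (0,1) := by
            rw [ContinuousLinearMap.map_add, ContinuousLinearMap.map_smul, ContinuousLinearMap.map_smul]; simp
    have hEta1 : ∀ (a c x : ℝ),
        HasDerivAt (fun s : ℝ => η (s - a, c)) (fderiv ℝ η (x - a, c) (1,0)) x := by
      intro a c x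
      have hline : HasDerivAt (fun s : ℝ => ((s - a, c) : ℝ × ℝ)) ((1,0) : ℝ × ℝ) x :=
        ((hasDerivAt_id x).sub_const a).prodMk (hasDerivAt_const x c)
      exact ((hη1 (x - a, c)).hasFDerivAt).comp_hasDerivAt x hline
    have hEta2 : ∀ (c a x : ℝ),
        HasDerivAt (fun s : ℝ => η (c, s - a)) (fderiv ℝ η (c, x - a) (0,1)) x := by
      intro c a x
      have hline : HasDerivAt (fun s : ℝ => ((c, s - a) : ℝ × ℝ)) ((0,1) : ℝ × ℝ) x :=
        (hasDerivAt_const x c).prodMk ((hasDerivAt_id x).sub_const a)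
      exact ((hη1 (c, x - a)).hasFDerivAt).comp_hasDerivAt x hline
    have hF1app1 : ∀ (e : ℝ × ℝ) (a c x : ℝ),
        HasDerivAt (fun s : ℝ => fderiv ℝ η (s - a, c) e)
          (fderiv ℝ (fderiv ℝ η) (x - a, c) (1,0) e) x := by
      intro e a c x
      have hline : HasDerivAt (fun s : ℝ => ((s - a, c) : ℝ × ℝ)) ((1,0) : ℝ × ℝ) x :=
        ((hasDerivAt_id x).sub_const a).prodMk (hasDerivAt_const x c)
      have hF : HasDerivAt (fun s : ℝ => fderiv ℝ η (s - a, c))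
          (fderiv ℝ (fderiv ℝ η) (x - a, c) (1,0)) x :=
        ((hF1d (x - a, c)).hasFDerivAt).comp_hasDerivAt x hline
      exact ((ContinuousLinearMap.apply ℝ ℝ e).hasFDerivAt).comp_hasDerivAt x hF
    have hEtaDir : ∀ (z w : ℝ × ℝ) (t : ℝ),
        HasDerivAt (fun t : ℝ => η (z.1 + t * w.1, z.2 + t * w.2))
          (fderiv ℝ η (z.1 + t * w.1, z.2 + t * w.2) w) t := by
      intro z w t
      have hline : HasDerivAt (fun t : ℝ => ((z.1 + t * w.1, z.2 + t * w.2) : ℝ × ℝ))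
          ((w.1, w.2) : ℝ × ℝ) t :=
        ((hasDerivAt_mul_const w.1).const_add z.1).prodMk
          ((hasDerivAt_mul_const w.2).const_add z.2)
      have := ((hη1 (z.1 + t * w.1, z.2 + t * w.2)).hasFDerivAt).comp_hasDerivAt t hline
      exact this
    have hsmuldiff : ∀ (z e : ℝ × ℝ) (s t : ℝ),
        ((z.1 + s * e.1, z.2 + s * e.2) : ℝ × ℝ) - (z.1 + t * e.1, z.2 + t * e.2)
          = (s - t) • e := by
      intro z e s t
      ext <;> simp <;> ring
    have hF1b : ∀ (e : ℝ × ℝ), ‖e‖ = 1 → ∀ z : ℝ × ℝ, |fderiv ℝ η z e| ≤ η z + B := by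
      intro e he z
      have hd : ∀ t : ℝ, HasDerivAt (fun t => η (z.1 + t * e.1, z.2 + t * e.2))
          (fderiv ℝ η (z.1 + t * e.1, z.2 + t * e.2) e) t := hEtaDir z e
      have hlip : ∀ s t : ℝ,
          |fderiv ℝ η (z.1 + s * e.1, z.2 + s * e.2) e
            - fderiv ℝ η (z.1 + t * e.1, z.2 + t * e.2) e| ≤ B * |s - t| := by
        intro s t
        calc |fderiv ℝ η (z.1 + s * e.1, z.2 + s * e.2) e
              - fderiv ℝ η (z.1 + t * e.1, z.2 + t * e.2) e|
            = |(fderiv ℝ η (z.1 + s * e.1, z.2 + s * e.2)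
              - fderiv ℝ η (z.1 + t * e.1, z.2 + t * e.2)) e| := by
              rw [ContinuousLinearMap.sub_apply]
          _ ≤ ‖fderiv ℝ η (z.1 + s * e.1, z.2 + s * e.2)
              - fderiv ℝ η (z.1 + t * e.1, z.2 + t * e.2)‖ := by
              simpa [he, Real.norm_eq_abs] using
                (fderiv ℝ η (z.1 + s * e.1, z.2 + s * e.2)
                  - fderiv ℝ η (z.1 + t * e.1, z.2 + t * e.2)).le_opNorm e
          _ ≤ M2 * ‖((z.1 + s * e.1, z.2 + s * e.2) : ℝ × ℝ)
              - (z.1 + t * e.1, z.2 + t * e.2)‖ := lipF1 _ _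
          _ = M2 * |s - t| := by rw [hsmuldiff, norm_smul, he, Real.norm_eq_abs, mul_one]
          _ ≤ B * |s - t| := by
              have : M2 ≤ B := by rw [hBdef]; linarith
              exact mul_le_mul_of_nonneg_right this (abs_nonneg _)
      have := landau hd (fun t => hηpos _) hBpos hlip
      simpa using this
    have hgrow : ∀ (z w : ℝ × ℝ),
        η (z.1 + w.1, z.2 + w.2) ≤ η z + (2 * η z + 2 * B) * ‖w‖ + B * ‖w‖^2 := by
      intro z w
      obtain ⟨c, hc, hceq⟩ := exists_hasDerivAt_eq_slope
        (fun t => η (z.1 + t * w.1, z.2 + t * w.2))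
        (fun t => fderiv ℝ η (z.1 + t * w.1, z.2 + t * w.2) w) one_pos
        (by
          have : Differentiable ℝ (fun t : ℝ => η (z.1 + t * w.1, z.2 + t * w.2)) :=
            fun t => (hEtaDir z w t).differentiableAt
          exact this.continuous.continuousOn)
        (fun x _ => hEtaDir z w x)
      have hceq' : fderiv ℝ η (z.1 + c * w.1, z.2 + c * w.2) w
          = η (z.1 + w.1, z.2 + w.2) - η z := by
        simpa using hceq
      have hval : η (z.1 + w.1, z.2 + w.2)
          = η z + fderiv ℝ η (z.1 + c * w.1, z.2 + c * w.2) w := by linarith [hceq']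
      have hz0 : ((z.1 + 0 * w.1, z.2 + 0 * w.2) : ℝ × ℝ) = z := by ext <;> simp
      have hzc : ‖((z.1 + c * w.1, z.2 + c * w.2) : ℝ × ℝ) - z‖ ≤ ‖w‖ := by
        have h1 := hsmuldiff z w c 0
        rw [hz0] at h1
        rw [h1, norm_smul]
        have hc1 : ‖c - 0‖ ≤ 1 := by
          rw [Real.norm_eq_abs, sub_zero, abs_of_pos hc.1]
          exact hc.2.le
        simpa using mul_le_mul_of_nonneg_right hc1 (norm_nonneg w)
      have hwfst : |w.1| ≤ ‖w‖ := by
        simpa [Real.norm_eq_abs] using norm_fst_le w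
      have hwsnd : |w.2| ≤ ‖w‖ := by
        simpa [Real.norm_eq_abs] using norm_snd_le w
      have hbound1 : |fderiv ℝ η z w| ≤ (2 * η z + 2 * B) * ‖w‖ := by
        rw [happly (fderiv ℝ η z) w]
        have t1 : |w.1 * fderiv ℝ η z (1,0)| ≤ ‖w‖ * (η z + B) := by
          rw [abs_mul]
          exact mul_le_mul hwfst (hF1b (1,0) he1 z) (abs_nonneg _) (norm_nonneg w)
        have t2 : |w.2 * fderiv ℝ η z (0,1)| ≤ ‖w‖ * (η z + B) := by
          rw [abs_mul]
          exact mul_le_mul hwsnd (hF1b (0,1) he2 z) (abs_nonneg _) (norm_nonneg w)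
        calc |w.1 * fderiv ℝ η z (1,0) + w.2 * fderiv ℝ η z (0,1)|
            ≤ |w.1 * fderiv ℝ η z (1,0)| + |w.2 * fderiv ℝ η z (0,1)| := abs_add_le _ _
          _ ≤ ‖w‖ * (η z + B) + ‖w‖ * (η z + B) := add_le_add t1 t2
          _ = (2 * η z + 2 * B) * ‖w‖ := by ring
      have hbound2 : |fderiv ℝ η (z.1 + c * w.1, z.2 + c * w.2) w - fderiv ℝ η z w|
          ≤ B * ‖w‖^2 := by
        have hM2B : M2 ≤ B := by rw [hBdef]; linarith
        calc |fderiv ℝ η (z.1 + c * w.1, z.2 + c * w.2) w - fderiv ℝ η z w|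
            = |(fderiv ℝ η (z.1 + c * w.1, z.2 + c * w.2) - fderiv ℝ η z) w| := by
              rw [ContinuousLinearMap.sub_apply]
          _ ≤ ‖fderiv ℝ η (z.1 + c * w.1, z.2 + c * w.2) - fderiv ℝ η z‖ * ‖w‖ := by
              simpa [Real.norm_eq_abs] using
                (fderiv ℝ η (z.1 + c * w.1, z.2 + c * w.2) - fderiv ℝ η z).le_opNorm w
          _ ≤ (M2 * ‖((z.1 + c * w.1, z.2 + c * w.2) : ℝ × ℝ) - z‖) * ‖w‖ :=
              mul_le_mul_of_nonneg_right (lipF1 _ _) (norm_nonneg w)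
          _ ≤ (M2 * ‖w‖) * ‖w‖ :=
              mul_le_mul_of_nonneg_right
                (mul_le_mul_of_nonneg_left hzc hM2n) (norm_nonneg w)
          _ ≤ B * ‖w‖^2 := by nlinarith [sq_nonneg ‖w‖, norm_nonneg w, hM2B]
      rw [hval]
      have habs1 := le_abs_self (fderiv ℝ η z w)
      have habs2 := le_abs_self
        (fderiv ℝ η (z.1 + c * w.1, z.2 + c * w.2) w - fderiv ℝ η z w)
      linarith [hbound1, hbound2, habs1, habs2]
    have hcont : ∀ x y : ℝ, Continuous fun p : ℝ × ℝ => η (x - p.1, y - p.2) :=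
      fun x y => hη.continuous.comp
        ((continuous_const.sub continuous_fst).prodMk (continuous_const.sub continuous_snd))
    have hcontF : ∀ (e : ℝ × ℝ) (x y : ℝ),
        Continuous fun p : ℝ × ℝ => fderiv ℝ η (x - p.1, y - p.2) e :=
      by
      intro e x y
      have h1 : Continuous fun p : ℝ × ℝ => fderiv ℝ η (x - p.1, y - p.2) :=
        hF1c.continuous.comp
          ((continuous_const.sub continuous_fst).prodMk (continuous_const.sub continuous_snd))
      exact h1.clm_apply continuous_const
    have hInt : ∀ x y : ℝ, Integrable (fun p : ℝ × ℝ => η (x - p.1, y - p.2) * ρ p) := by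
      intro x y
      have hmeas : AEStronglyMeasurable (fun p : ℝ × ℝ => η (x - p.1, y - p.2) * ρ p) volume :=
        ((hcont x y).aestronglyMeasurable).mul hρ.1
      have h0abs : Integrable (fun p : ℝ × ℝ => η (x₀ - p.1, y₀ - p.2) * |ρ p|) := by
        refine h₀.abs.congr (Filter.Eventually.of_forall fun p => ?_)
        dsimp only
        rw [abs_mul, abs_of_nonneg (hηpos _)]
      set w : ℝ × ℝ := (x - x₀, y - y₀) with hwdef
      refine Integrable.mono'
        ((h0abs.const_mul (1 + 2 * ‖w‖)).add
          (hρ.abs.const_mul (2 * B * ‖w‖ + B * ‖w‖^2))) hmeas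
        (Filter.Eventually.of_forall fun p => ?_)
      have hgp := hgrow (x₀ - p.1, y₀ - p.2) w
      have harg : ((x₀ - p.1) + (x - x₀), (y₀ - p.2) + (y - y₀)) = ((x - p.1, y - p.2) : ℝ × ℝ) := by
        ext <;> dsimp <;> ring
      rw [hwdef] at hgp
      simp only [harg] at hgp
      have h1 : ‖η (x - p.1, y - p.2) * ρ p‖ = η (x - p.1, y - p.2) * |ρ p| := by
        rw [Real.norm_eq_abs, abs_mul, abs_of_nonneg (hηpos _)]
      rw [h1]
      have h2 : η (x - p.1, y - p.2) * |ρ p|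
          ≤ (η (x₀ - p.1, y₀ - p.2) + (2 * η (x₀ - p.1, y₀ - p.2) + 2 * B) * ‖w‖ + B * ‖w‖^2)
            * |ρ p| :=
        mul_le_mul_of_nonneg_right hgp (abs_nonneg _)
      calc η (x - p.1, y - p.2) * |ρ p|
          ≤ (η (x₀ - p.1, y₀ - p.2) + (2 * η (x₀ - p.1, y₀ - p.2) + 2 * B) * ‖w‖ + B * ‖w‖^2)
            * |ρ p| := h2
        _ = (1 + 2 * ‖w‖) * (η (x₀ - p.1, y₀ - p.2) * |ρ p|)
            + (2 * B * ‖w‖ + B * ‖w‖^2) * |ρ p| := by ring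
    have hIntAbs : ∀ x y : ℝ, Integrable (fun p : ℝ × ℝ => η (x - p.1, y - p.2) * |ρ p|) := by
      intro x y
      refine (hInt x y).abs.congr (Filter.Eventually.of_forall fun p => ?_)
      dsimp only
      rw [abs_mul, abs_of_nonneg (hηpos _)]
    have hIntF : ∀ (e : ℝ × ℝ), ‖e‖ = 1 → ∀ x y : ℝ,
        Integrable (fun p : ℝ × ℝ => fderiv ℝ η (x - p.1, y - p.2) e * ρ p) := by
      intro e he x y
      refine Integrable.mono' ((hIntAbs x y).add (hρ.abs.const_mul B))
        (((hcontF e x y).aestronglyMeasurable).mul hρ.1)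
        (Filter.Eventually.of_forall fun p => ?_)
      rw [Real.norm_eq_abs, abs_mul]
      calc |fderiv ℝ η (x - p.1, y - p.2) e| * |ρ p|
          ≤ (η (x - p.1, y - p.2) + B) * |ρ p| :=
            mul_le_mul_of_nonneg_right (hF1b e he _) (abs_nonneg _)
        _ = η (x - p.1, y - p.2) * |ρ p| + B * |ρ p| := by ring
    have hd1eq : ∀ x yy : ℝ,
        d1 x yy = ∫ p : ℝ × ℝ, fderiv ℝ η (x - p.1, yy - p.2) (1,0) * ρ p := by
      intro x yy
      have key := hasDerivAt_integral_of_dominated_loc_of_deriv_le (μ := volume) (x₀ := x)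
        (F := fun t (p : ℝ × ℝ) => η (t - p.1, yy - p.2) * ρ p)
        (F' := fun t (p : ℝ × ℝ) => fderiv ℝ η (t - p.1, yy - p.2) (1,0) * ρ p)
        (bound := fun p => η (x - p.1, yy - p.2) * |ρ p| + (B + M2) * |ρ p|)
        (Metric.ball_mem_nhds x zero_lt_one)
        (Filter.Eventually.of_forall fun t => ((hcont t yy).aestronglyMeasurable).mul hρ.1)
        (hInt x yy)
        ((hIntF (1,0) he1 x yy)).aestronglyMeasurable
        (Filter.Eventually.of_forall fun p => ?_)
        ((hIntAbs x yy).add (hρ.abs.const_mul (B + M2)))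
        (Filter.Eventually.of_forall fun p => ?_)
      · rw [hd1 x yy]
        have e0 : (fun t => conv t yy) = fun t => ∫ p : ℝ × ℝ, η (t - p.1, yy - p.2) * ρ p :=
          funext fun t => hconv t yy
        rw [e0]
        exact key.2.deriv
      · intro t ht
        rw [Real.norm_eq_abs, abs_mul]
        have hdist : |t - x| ≤ 1 := by
          have := Metric.mem_ball.1 ht
          rw [Real.dist_eq] at this
          exact this.le
        have hlipapp : |fderiv ℝ η (t - p.1, yy - p.2) (1,0)
            - fderiv ℝ η (x - p.1, yy - p.2) (1,0)| ≤ M2 := by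
          calc |fderiv ℝ η (t - p.1, yy - p.2) (1,0) - fderiv ℝ η (x - p.1, yy - p.2) (1,0)|
              = |(fderiv ℝ η (t - p.1, yy - p.2) - fderiv ℝ η (x - p.1, yy - p.2)) (1,0)| := by
                rw [ContinuousLinearMap.sub_apply]
            _ ≤ ‖fderiv ℝ η (t - p.1, yy - p.2) - fderiv ℝ η (x - p.1, yy - p.2)‖ := by
                simpa [he1, Real.norm_eq_abs] using
                  (fderiv ℝ η (t - p.1, yy - p.2) - fderiv ℝ η (x - p.1, yy - p.2)).le_opNorm
                    ((1,0) : ℝ × ℝ)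
            _ ≤ M2 * ‖((t - p.1, yy - p.2) : ℝ × ℝ) - (x - p.1, yy - p.2)‖ := lipF1 _ _
            _ = M2 * |t - x| := by
                have : ((t - p.1, yy - p.2) : ℝ × ℝ) - (x - p.1, yy - p.2) = (t - x, 0) := by
                  ext <;> dsimp <;> ring
                rw [this, hnormmk]
                simp [abs_nonneg]
            _ ≤ M2 := by
                nlinarith [hdist, hM2n, abs_nonneg (t - x)]
        have h1 : |fderiv ℝ η (t - p.1, yy - p.2) (1,0)|
            ≤ η (x - p.1, yy - p.2) + B + M2 := by
          have := hF1b (1,0) he1 (x - p.1, yy - p.2)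
          have htr := abs_sub_abs_le_abs_sub (fderiv ℝ η (t - p.1, yy - p.2) (1,0))
            (fderiv ℝ η (x - p.1, yy - p.2) (1,0))
          linarith
        calc |fderiv ℝ η (t - p.1, yy - p.2) (1,0)| * |ρ p|
            ≤ (η (x - p.1, yy - p.2) + B + M2) * |ρ p| :=
              mul_le_mul_of_nonneg_right h1 (abs_nonneg _)
          _ = η (x - p.1, yy - p.2) * |ρ p| + (B + M2) * |ρ p| := by ring
      · intro t ht
        exact (hEta1 p.1 (yy - p.2) t).mul_const (ρ p)
    have hd2eq : ∀ x yy : ℝ,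
        d2 x yy = ∫ p : ℝ × ℝ, fderiv ℝ η (x - p.1, yy - p.2) (0,1) * ρ p := by
      intro x yy
      have key := hasDerivAt_integral_of_dominated_loc_of_deriv_le (μ := volume) (x₀ := yy)
        (F := fun t (p : ℝ × ℝ) => η (x - p.1, t - p.2) * ρ p)
        (F' := fun t (p : ℝ × ℝ) => fderiv ℝ η (x - p.1, t - p.2) (0,1) * ρ p)
        (bound := fun p => η (x - p.1, yy - p.2) * |ρ p| + (B + M2) * |ρ p|)
        (Metric.ball_mem_nhds yy zero_lt_one)
        (Filter.Eventually.of_forall fun t => ((hcont x t).aestronglyMeasurable).mul hρ.1)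
        (hInt x yy)
        ((hIntF (0,1) he2 x yy)).aestronglyMeasurable
        (Filter.Eventually.of_forall fun p => ?_)
        ((hIntAbs x yy).add (hρ.abs.const_mul (B + M2)))
        (Filter.Eventually.of_forall fun p => ?_)
      · rw [hd2 x yy]
        have e0 : (fun t => conv x t) = fun t => ∫ p : ℝ × ℝ, η (x - p.1, t - p.2) * ρ p :=
          funext fun t => hconv x t
        rw [e0]
        exact key.2.deriv
      · intro t ht
        rw [Real.norm_eq_abs, abs_mul]
        have hdist : |t - yy| ≤ 1 := by
          have := Metric.mem_ball.1 ht
          rw [Real.dist_eq] at this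
          exact this.le
        have hlipapp : |fderiv ℝ η (x - p.1, t - p.2) (0,1)
            - fderiv ℝ η (x - p.1, yy - p.2) (0,1)| ≤ M2 := by
          calc |fderiv ℝ η (x - p.1, t - p.2) (0,1) - fderiv ℝ η (x - p.1, yy - p.2) (0,1)|
              = |(fderiv ℝ η (x - p.1, t - p.2) - fderiv ℝ η (x - p.1, yy - p.2)) (0,1)| := by
                rw [ContinuousLinearMap.sub_apply]
            _ ≤ ‖fderiv ℝ η (x - p.1, t - p.2) - fderiv ℝ η (x - p.1, yy - p.2)‖ := by
                simpa [he2, Real.norm_eq_abs] using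
                  (fderiv ℝ η (x - p.1, t - p.2) - fderiv ℝ η (x - p.1, yy - p.2)).le_opNorm
                    ((0,1) : ℝ × ℝ)
            _ ≤ M2 * ‖((x - p.1, t - p.2) : ℝ × ℝ) - (x - p.1, yy - p.2)‖ := lipF1 _ _
            _ = M2 * |t - yy| := by
                have : ((x - p.1, t - p.2) : ℝ × ℝ) - (x - p.1, yy - p.2) = (0, t - yy) := by
                  ext <;> dsimp <;> ring
                rw [this, hnormmk]
                simp [abs_nonneg]
            _ ≤ M2 := by
                nlinarith [hdist, hM2n, abs_nonneg (t - yy)]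
        have h1 : |fderiv ℝ η (x - p.1, t - p.2) (0,1)|
            ≤ η (x - p.1, yy - p.2) + B + M2 := by
          have := hF1b (0,1) he2 (x - p.1, yy - p.2)
          have htr := abs_sub_abs_le_abs_sub (fderiv ℝ η (x - p.1, t - p.2) (0,1))
            (fderiv ℝ η (x - p.1, yy - p.2) (0,1))
          linarith
        calc |fderiv ℝ η (x - p.1, t - p.2) (0,1)| * |ρ p|
            ≤ (η (x - p.1, yy - p.2) + B + M2) * |ρ p| :=
              mul_le_mul_of_nonneg_right h1 (abs_nonneg _)
          _ = η (x - p.1, yy - p.2) * |ρ p| + (B + M2) * |ρ p| := by ring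
      · intro t ht
        exact (hEta2 (x - p.1) p.2 t).mul_const (ρ p)
    have happdiff : ∀ (e : ℝ × ℝ), ‖e‖ = 1 → ∀ z1 z2 : ℝ × ℝ,
        |fderiv ℝ η z1 e - fderiv ℝ η z2 e| ≤ M2 * ‖z1 - z2‖ := by
      intro e he z1 z2
      calc |fderiv ℝ η z1 e - fderiv ℝ η z2 e|
          = |(fderiv ℝ η z1 - fderiv ℝ η z2) e| := by rw [ContinuousLinearMap.sub_apply]
        _ ≤ ‖fderiv ℝ η z1 - fderiv ℝ η z2‖ := by
            simpa [he, Real.norm_eq_abs] using (fderiv ℝ η z1 - fderiv ℝ η z2).le_opNorm e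
        _ ≤ M2 * ‖z1 - z2‖ := lipF1 _ _
    have hdiffInt : ∀ (e : ℝ × ℝ), ‖e‖ = 1 → ∀ (xa ya xb yb : ℝ),
        |(∫ p : ℝ × ℝ, fderiv ℝ η (xa - p.1, ya - p.2) e * ρ p)
          - ∫ p : ℝ × ℝ, fderiv ℝ η (xb - p.1, yb - p.2) e * ρ p|
        ≤ M2 * ‖((xa - xb, ya - yb) : ℝ × ℝ)‖ * R := by
      intro e he xa ya xb yb
      rw [← integral_sub (hIntF e he xa ya) (hIntF e he xb yb)]
      have hb : ∀ p : ℝ × ℝ, ‖fderiv ℝ η (xa - p.1, ya - p.2) e * ρ p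
          - fderiv ℝ η (xb - p.1, yb - p.2) e * ρ p‖
          ≤ (M2 * ‖((xa - xb, ya - yb) : ℝ × ℝ)‖) * |ρ p| := by
        intro p
        rw [← sub_mul, Real.norm_eq_abs, abs_mul]
        refine mul_le_mul_of_nonneg_right ?_ (abs_nonneg _)
        have := happdiff e he (xa - p.1, ya - p.2) (xb - p.1, yb - p.2)
        have harg : ((xa - p.1, ya - p.2) : ℝ × ℝ) - (xb - p.1, yb - p.2)
            = (xa - xb, ya - yb) := by ext <;> dsimp <;> ring
        rwa [harg] at this
      have hkey := norm_integral_le_of_norm_le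
        ((hρ.abs).const_mul (M2 * ‖((xa - xb, ya - yb) : ℝ × ℝ)‖))
        (Filter.Eventually.of_forall hb)
      rw [Real.norm_eq_abs] at hkey
      calc |∫ p : ℝ × ℝ, (fderiv ℝ η (xa - p.1, ya - p.2) e * ρ p
            - fderiv ℝ η (xb - p.1, yb - p.2) e * ρ p)|
          ≤ ∫ p : ℝ × ℝ, (M2 * ‖((xa - xb, ya - yb) : ℝ × ℝ)‖) * |ρ p| := hkey
        _ = M2 * ‖((xa - xb, ya - yb) : ℝ × ℝ)‖ * R := by
            rw [integral_const_mul]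
    have hmixPt : ∀ (e : ℝ × ℝ), ‖e‖ = 1 → ∀ p : ℝ × ℝ,
        |fderiv ℝ η (xp - p.1, y - p.2) e - fderiv ℝ η (xp - p.1, y' - p.2) e
          - fderiv ℝ η (xm - p.1, y - p.2) e + fderiv ℝ η (xm - p.1, y' - p.2) e|
        ≤ M3 * Δx * Δy := by
      intro e he p
      have hd : ∀ s : ℝ, HasDerivAt
          (fun s => fderiv ℝ η (s - p.1, y - p.2) e - fderiv ℝ η (s - p.1, y' - p.2) e)
          (fderiv ℝ (fderiv ℝ η) (s - p.1, y - p.2) (1,0) e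
            - fderiv ℝ (fderiv ℝ η) (s - p.1, y' - p.2) (1,0) e) s :=
        fun s => (hF1app1 e p.1 (y - p.2) s).sub (hF1app1 e p.1 (y' - p.2) s)
      have hC : ∀ s : ℝ, |fderiv ℝ (fderiv ℝ η) (s - p.1, y - p.2) (1,0) e
          - fderiv ℝ (fderiv ℝ η) (s - p.1, y' - p.2) (1,0) e| ≤ M3 * Δy := by
        intro s
        have h1 : |fderiv ℝ (fderiv ℝ η) (s - p.1, y - p.2) (1,0) e
            - fderiv ℝ (fderiv ℝ η) (s - p.1, y' - p.2) (1,0) e|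
            ≤ ‖fderiv ℝ (fderiv ℝ η) (s - p.1, y - p.2)
              - fderiv ℝ (fderiv ℝ η) (s - p.1, y' - p.2)‖ := by
          have e1 : fderiv ℝ (fderiv ℝ η) (s - p.1, y - p.2) (1,0) e
              - fderiv ℝ (fderiv ℝ η) (s - p.1, y' - p.2) (1,0) e
              = ((fderiv ℝ (fderiv ℝ η) (s - p.1, y - p.2)
                - fderiv ℝ (fderiv ℝ η) (s - p.1, y' - p.2)) ((1,0) : ℝ × ℝ)) e := by
            rw [ContinuousLinearMap.sub_apply, ContinuousLinearMap.sub_apply]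
          rw [e1]
          calc |((fderiv ℝ (fderiv ℝ η) (s - p.1, y - p.2)
                - fderiv ℝ (fderiv ℝ η) (s - p.1, y' - p.2)) ((1,0) : ℝ × ℝ)) e|
              ≤ ‖(fderiv ℝ (fderiv ℝ η) (s - p.1, y - p.2)
                - fderiv ℝ (fderiv ℝ η) (s - p.1, y' - p.2)) ((1,0) : ℝ × ℝ)‖ * ‖e‖ := by
                simpa [Real.norm_eq_abs] using ((fderiv ℝ (fderiv ℝ η) (s - p.1, y - p.2)
                  - fderiv ℝ (fderiv ℝ η) (s - p.1, y' - p.2)) ((1,0) : ℝ × ℝ)).le_opNorm e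
            _ ≤ (‖fderiv ℝ (fderiv ℝ η) (s - p.1, y - p.2)
                - fderiv ℝ (fderiv ℝ η) (s - p.1, y' - p.2)‖ * ‖((1,0) : ℝ × ℝ)‖) * ‖e‖ :=
                mul_le_mul_of_nonneg_right (ContinuousLinearMap.le_opNorm _ _) (norm_nonneg e)
            _ = ‖fderiv ℝ (fderiv ℝ η) (s - p.1, y - p.2)
                - fderiv ℝ (fderiv ℝ η) (s - p.1, y' - p.2)‖ := by rw [he1, he]; ring
        have h2 := lipF2 (s - p.1, y - p.2) (s - p.1, y' - p.2)
        have harg : ((s - p.1, y - p.2) : ℝ × ℝ) - (s - p.1, y' - p.2) = (0, y - y') := by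
          ext <;> dsimp <;> ring
        rw [harg, hnormmk] at h2
        simp only [abs_zero] at h2
        rw [max_eq_right (abs_nonneg _)] at h2
        rw [hΔy] at h2
        linarith
      have hmv := mvt_global hd hC xm xp
      have harr : (fun s => fderiv ℝ η (s - p.1, y - p.2) e
          - fderiv ℝ η (s - p.1, y' - p.2) e) xp
          - (fun s => fderiv ℝ η (s - p.1, y - p.2) e
          - fderiv ℝ η (s - p.1, y' - p.2) e) xm
          = fderiv ℝ η (xp - p.1, y - p.2) e - fderiv ℝ η (xp - p.1, y' - p.2) e
          - fderiv ℝ η (xm - p.1, y - p.2) e + fderiv ℝ η (xm - p.1, y' - p.2) e := by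
        dsimp only
        ring
      rw [harr, hΔx] at hmv
      calc |fderiv ℝ η (xp - p.1, y - p.2) e - fderiv ℝ η (xp - p.1, y' - p.2) e
          - fderiv ℝ η (xm - p.1, y - p.2) e + fderiv ℝ η (xm - p.1, y' - p.2) e|
          ≤ M3 * Δy * Δx := hmv
        _ = M3 * Δx * Δy := by ring
    have hmixInt : ∀ (e : ℝ × ℝ), ‖e‖ = 1 →
        |(∫ p : ℝ × ℝ, fderiv ℝ η (xp - p.1, y - p.2) e * ρ p)
          - (∫ p : ℝ × ℝ, fderiv ℝ η (xp - p.1, y' - p.2) e * ρ p)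
          - (∫ p : ℝ × ℝ, fderiv ℝ η (xm - p.1, y - p.2) e * ρ p)
          + (∫ p : ℝ × ℝ, fderiv ℝ η (xm - p.1, y' - p.2) e * ρ p)|
        ≤ M3 * Δx * Δy * R := by
      intro e he
      have e1 : (∫ p : ℝ × ℝ, (fderiv ℝ η (xp - p.1, y - p.2) e * ρ p
            - fderiv ℝ η (xp - p.1, y' - p.2) e * ρ p))
          = (∫ p : ℝ × ℝ, fderiv ℝ η (xp - p.1, y - p.2) e * ρ p)
            - ∫ p : ℝ × ℝ, fderiv ℝ η (xp - p.1, y' - p.2) e * ρ p :=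
        integral_sub (hIntF e he xp y) (hIntF e he xp y')
      have e2 : (∫ p : ℝ × ℝ, (fderiv ℝ η (xp - p.1, y - p.2) e * ρ p
            - fderiv ℝ η (xp - p.1, y' - p.2) e * ρ p
            - fderiv ℝ η (xm - p.1, y - p.2) e * ρ p))
          = (∫ p : ℝ × ℝ, (fderiv ℝ η (xp - p.1, y - p.2) e * ρ p
            - fderiv ℝ η (xp - p.1, y' - p.2) e * ρ p))
            - ∫ p : ℝ × ℝ, fderiv ℝ η (xm - p.1, y - p.2) e * ρ p :=
        integral_sub ((hIntF e he xp y).sub (hIntF e he xp y')) (hIntF e he xm y)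
      have e3 : (∫ p : ℝ × ℝ, (fderiv ℝ η (xp - p.1, y - p.2) e * ρ p
            - fderiv ℝ η (xp - p.1, y' - p.2) e * ρ p
            - fderiv ℝ η (xm - p.1, y - p.2) e * ρ p
            + fderiv ℝ η (xm - p.1, y' - p.2) e * ρ p))
          = (∫ p : ℝ × ℝ, (fderiv ℝ η (xp - p.1, y - p.2) e * ρ p
            - fderiv ℝ η (xp - p.1, y' - p.2) e * ρ p
            - fderiv ℝ η (xm - p.1, y - p.2) e * ρ p))
            + ∫ p : ℝ × ℝ, fderiv ℝ η (xm - p.1, y' - p.2) e * ρ p :=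
        integral_add (((hIntF e he xp y).sub (hIntF e he xp y')).sub (hIntF e he xm y))
          (hIntF e he xm y')
      have ecomb : (∫ p : ℝ × ℝ, fderiv ℝ η (xp - p.1, y - p.2) e * ρ p)
          - (∫ p : ℝ × ℝ, fderiv ℝ η (xp - p.1, y' - p.2) e * ρ p)
          - (∫ p : ℝ × ℝ, fderiv ℝ η (xm - p.1, y - p.2) e * ρ p)
          + (∫ p : ℝ × ℝ, fderiv ℝ η (xm - p.1, y' - p.2) e * ρ p)
          = ∫ p : ℝ × ℝ, (fderiv ℝ η (xp - p.1, y - p.2) e * ρ p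
            - fderiv ℝ η (xp - p.1, y' - p.2) e * ρ p
            - fderiv ℝ η (xm - p.1, y - p.2) e * ρ p
            + fderiv ℝ η (xm - p.1, y' - p.2) e * ρ p) := by
        rw [e3, e2, e1]
      rw [ecomb]
      have hb : ∀ p : ℝ × ℝ, ‖fderiv ℝ η (xp - p.1, y - p.2) e * ρ p
          - fderiv ℝ η (xp - p.1, y' - p.2) e * ρ p
          - fderiv ℝ η (xm - p.1, y - p.2) e * ρ p
          + fderiv ℝ η (xm - p.1, y' - p.2) e * ρ p‖
          ≤ (M3 * Δx * Δy) * |ρ p| := by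
        intro p
        have e1 : fderiv ℝ η (xp - p.1, y - p.2) e * ρ p
            - fderiv ℝ η (xp - p.1, y' - p.2) e * ρ p
            - fderiv ℝ η (xm - p.1, y - p.2) e * ρ p
            + fderiv ℝ η (xm - p.1, y' - p.2) e * ρ p
            = (fderiv ℝ η (xp - p.1, y - p.2) e - fderiv ℝ η (xp - p.1, y' - p.2) e
              - fderiv ℝ η (xm - p.1, y - p.2) e + fderiv ℝ η (xm - p.1, y' - p.2) e) * ρ p := by
          ring
        rw [e1, Real.norm_eq_abs, abs_mul]
        exact mul_le_mul_of_nonneg_right (hmixPt e he p) (abs_nonneg _)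
      have hkey := norm_integral_le_of_norm_le
        ((hρ.abs).const_mul (M3 * Δx * Δy)) (Filter.Eventually.of_forall hb)
      rw [Real.norm_eq_abs] at hkey
      calc |∫ p : ℝ × ℝ, (fderiv ℝ η (xp - p.1, y - p.2) e * ρ p
            - fderiv ℝ η (xp - p.1, y' - p.2) e * ρ p
            - fderiv ℝ η (xm - p.1, y - p.2) e * ρ p
            + fderiv ℝ η (xm - p.1, y' - p.2) e * ρ p)|
          ≤ ∫ p : ℝ × ℝ, (M3 * Δx * Δy) * |ρ p| := hkey
        _ = M3 * Δx * Δy * R := by rw [integral_const_mul]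
    have hnorm10 : ∀ u : ℝ, ‖((u, (0:ℝ)) : ℝ × ℝ)‖ = |u| := by
      intro u; rw [hnormmk]; simp
    have hnorm01 : ∀ u : ℝ, ‖(((0:ℝ), u) : ℝ × ℝ)‖ = |u| := by
      intro u; rw [hnormmk]; simp
    have hx1 : ∀ yy : ℝ, |d1 xp yy - d1 xm yy| ≤ M2 * R * Δx := by
      intro yy
      rw [hd1eq, hd1eq]
      have hthis := hdiffInt (1,0) he1 xp yy xm yy
      rw [show ((xp - xm, yy - yy) : ℝ × ℝ) = (xp - xm, 0) by rw [sub_self]] at hthis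
      rw [hnorm10, hΔx] at hthis
      linarith [hthis]
    have hx2 : ∀ yy : ℝ, |d2 xp yy - d2 xm yy| ≤ M2 * R * Δx := by
      intro yy
      rw [hd2eq, hd2eq]
      have hthis := hdiffInt (0,1) he2 xp yy xm yy
      rw [show ((xp - xm, yy - yy) : ℝ × ℝ) = (xp - xm, 0) by rw [sub_self]] at hthis
      rw [hnorm10, hΔx] at hthis
      linarith [hthis]
    have hy1 : |d1 xm y - d1 xm y'| ≤ M2 * R * Δy := by
      rw [hd1eq, hd1eq]
      have hthis := hdiffInt (1,0) he1 xm y xm y'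
      rw [show ((xm - xm, y - y') : ℝ × ℝ) = (0, y - y') by rw [sub_self]] at hthis
      rw [hnorm01, hΔy] at hthis
      linarith [hthis]
    have hy2 : |d2 xm y - d2 xm y'| ≤ M2 * R * Δy := by
      rw [hd2eq, hd2eq]
      have hthis := hdiffInt (0,1) he2 xm y xm y'
      rw [show ((xm - xm, y - y') : ℝ × ℝ) = (0, y - y') by rw [sub_self]] at hthis
      rw [hnorm01, hΔy] at hthis
      linarith [hthis]
    have hw1 : |d1 xp y - d1 xp y' - d1 xm y + d1 xm y'| ≤ M3 * Δx * Δy * R := by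
      rw [hd1eq, hd1eq, hd1eq, hd1eq]
      exact hmixInt (1,0) he1
    have hw2 : |d2 xp y - d2 xp y' - d2 xm y + d2 xm y'| ≤ M3 * Δx * Δy * R := by
      rw [hd2eq, hd2eq, hd2eq, hd2eq]
      exact hmixInt (0,1) he2
    have hphi : ∀ xx yy : ℝ, J₁ xx yy = -(ε * phi (d1 xx yy) (d2 xx yy)) := by
      intro xx yy
      rw [hJ₁, phi, mul_div_assoc]
    set a1 := d1 xp y with ha1
    set a2 := d2 xp y with ha2
    set b1 := d1 xp y' with hb1
    set b2 := d2 xp y' with hb2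
    set c1 := d1 xm y with hc1
    set c2 := d2 xm y with hc2
    set f1 := d1 xm y' with hf1
    set f2 := d2 xm y' with hf2
    have hMRx : 0 ≤ M2 * R * Δx := by positivity
    have hMRy : 0 ≤ M2 * R * Δy := by positivity
    have key : |phi a1 a2 - phi b1 b2 - phi c1 c2 + phi f1 f2|
        ≤ (2 * M3 * R + 6 * M2^2 * R^2) * (Δx * Δy) := by
      have hD : ∀ t : ℝ, HasDerivAt
          (fun t => phi (b1 + (a1-b1)*t) (b2 + (a2-b2)*t)
            - phi (f1 + (c1-f1)*t) (f2 + (c2-f2)*t))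
          ((phia (b1+(a1-b1)*t) (b2+(a2-b2)*t) * (a1-b1)
            + phib (b1+(a1-b1)*t) (b2+(a2-b2)*t) * (a2-b2))
          - (phia (f1+(c1-f1)*t) (f2+(c2-f2)*t) * (c1-f1)
            + phib (f1+(c1-f1)*t) (f2+(c2-f2)*t) * (c2-f2))) t :=
        fun t => (phi_line b1 (a1-b1) b2 (a2-b2) t).sub (phi_line f1 (c1-f1) f2 (c2-f2) t)
      have hC : ∀ t ∈ Set.Icc (0:ℝ) 1,
          |(phia (b1+(a1-b1)*t) (b2+(a2-b2)*t) * (a1-b1)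
            + phib (b1+(a1-b1)*t) (b2+(a2-b2)*t) * (a2-b2))
          - (phia (f1+(c1-f1)*t) (f2+(c2-f2)*t) * (c1-f1)
            + phib (f1+(c1-f1)*t) (f2+(c2-f2)*t) * (c2-f2))|
          ≤ (2 * M3 * R + 6 * M2^2 * R^2) * (Δx * Δy) := by
        intro t ht
        obtain ⟨ht0, ht1⟩ := ht
        set p1 := b1 + (a1-b1)*t with hp1
        set p2 := b2 + (a2-b2)*t with hp2
        set q1 := f1 + (c1-f1)*t with hq1
        set q2 := f2 + (c2-f2)*t with hq2
        have hP1Q1 : |p1 - q1| ≤ M2*R*Δx := by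
          rw [hp1, hq1, show (b1 + (a1-b1)*t) - (f1 + (c1-f1)*t)
            = (1-t)*(b1-f1) + t*(a1-c1) by ring]
          calc |(1-t)*(b1-f1) + t*(a1-c1)| ≤ |(1-t)*(b1-f1)| + |t*(a1-c1)| := abs_add_le _ _
            _ = (1-t)*|b1-f1| + t*|a1-c1| := by
                rw [abs_mul, abs_mul, abs_of_nonneg (by linarith : (0:ℝ) ≤ 1-t),
                  abs_of_nonneg ht0]
            _ ≤ (1-t)*(M2*R*Δx) + t*(M2*R*Δx) :=
                add_le_add (mul_le_mul_of_nonneg_left (hx1 y') (by linarith))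
                  (mul_le_mul_of_nonneg_left (hx1 y) ht0)
            _ = M2*R*Δx := by ring
        have hP2Q2 : |p2 - q2| ≤ M2*R*Δx := by
          rw [hp2, hq2, show (b2 + (a2-b2)*t) - (f2 + (c2-f2)*t)
            = (1-t)*(b2-f2) + t*(a2-c2) by ring]
          calc |(1-t)*(b2-f2) + t*(a2-c2)| ≤ |(1-t)*(b2-f2)| + |t*(a2-c2)| := abs_add_le _ _
            _ = (1-t)*|b2-f2| + t*|a2-c2| := by
                rw [abs_mul, abs_mul, abs_of_nonneg (by linarith : (0:ℝ) ≤ 1-t),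
                  abs_of_nonneg ht0]
            _ ≤ (1-t)*(M2*R*Δx) + t*(M2*R*Δx) :=
                add_le_add (mul_le_mul_of_nonneg_left (hx2 y') (by linarith))
                  (mul_le_mul_of_nonneg_left (hx2 y) ht0)
            _ = M2*R*Δx := by ring
        have hdA : |phia p1 p2 - phia q1 q2| ≤ 3 * (M2*R*Δx) := by
          have h1 := phia_diff p1 p2 q1 q2
          linarith
        have hdB : |phib p1 p2 - phib q1 q2| ≤ 3 * (M2*R*Δx) := by
          have h1 := phib_diff p1 p2 q1 q2
          linarith
        have hw1' : |(a1-b1) - (c1-f1)| ≤ M3 * Δx * Δy * R := by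
          rw [show (a1-b1) - (c1-f1) = a1 - b1 - c1 + f1 by ring]
          exact hw1
        have hw2' : |(a2-b2) - (c2-f2)| ≤ M3 * Δx * Δy * R := by
          rw [show (a2-b2) - (c2-f2) = a2 - b2 - c2 + f2 by ring]
          exact hw2
        have hident : (phia p1 p2 * (a1-b1) + phib p1 p2 * (a2-b2))
          - (phia q1 q2 * (c1-f1) + phib q1 q2 * (c2-f2))
          = phia p1 p2 * ((a1-b1) - (c1-f1))
            + phib p1 p2 * ((a2-b2) - (c2-f2))
            + (phia p1 p2 - phia q1 q2) * (c1-f1)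
            + (phib p1 p2 - phib q1 q2) * (c2-f2) := by ring
        rw [hident]
        have t1 : |phia p1 p2 * ((a1-b1) - (c1-f1))| ≤ M3 * Δx * Δy * R := by
          rw [abs_mul]
          calc |phia p1 p2| * |(a1-b1) - (c1-f1)| ≤ 1 * (M3 * Δx * Δy * R) :=
              mul_le_mul (phia_abs_le _ _) hw1' (abs_nonneg _) zero_le_one
            _ = M3 * Δx * Δy * R := one_mul _
        have t2 : |phib p1 p2 * ((a2-b2) - (c2-f2))| ≤ M3 * Δx * Δy * R := by
          rw [abs_mul]
          calc |phib p1 p2| * |(a2-b2) - (c2-f2)| ≤ 1 * (M3 * Δx * Δy * R) :=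
              mul_le_mul (phib_abs_le _ _) hw2' (abs_nonneg _) zero_le_one
            _ = M3 * Δx * Δy * R := one_mul _
        have t3 : |(phia p1 p2 - phia q1 q2) * (c1-f1)| ≤ (3 * (M2*R*Δx)) * (M2*R*Δy) := by
          rw [abs_mul]
          exact mul_le_mul hdA hy1 (abs_nonneg _) (by positivity)
        have t4 : |(phib p1 p2 - phib q1 q2) * (c2-f2)| ≤ (3 * (M2*R*Δx)) * (M2*R*Δy) := by
          rw [abs_mul]
          exact mul_le_mul hdB hy2 (abs_nonneg _) (by positivity)
        have htot3 := abs_add_le (phia p1 p2 * ((a1-b1) - (c1-f1)))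
          (phib p1 p2 * ((a2-b2) - (c2-f2)))
        have htot2 := abs_add_le (phia p1 p2 * ((a1-b1) - (c1-f1))
            + phib p1 p2 * ((a2-b2) - (c2-f2)))
          ((phia p1 p2 - phia q1 q2) * (c1-f1))
        have htot := abs_add_le (phia p1 p2 * ((a1-b1) - (c1-f1))
            + phib p1 p2 * ((a2-b2) - (c2-f2))
            + (phia p1 p2 - phia q1 q2) * (c1-f1))
          ((phib p1 p2 - phib q1 q2) * (c2-f2))
        have hfin : (2 * M3 * R + 6 * M2^2 * R^2) * (Δx * Δy)
            = (M3 * Δx * Δy * R) + (M3 * Δx * Δy * R)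
              + ((3 * (M2*R*Δx)) * (M2*R*Δy) + (3 * (M2*R*Δx)) * (M2*R*Δy)) := by ring
        rw [hfin]
        linarith [t1, t2, t3, t4, htot, htot2, htot3]
      have hmv := mvt_Icc hD hC
      have h1eq : phi (b1 + (a1-b1)*1) (b2 + (a2-b2)*1) - phi (f1 + (c1-f1)*1) (f2 + (c2-f2)*1)
          = phi a1 a2 - phi c1 c2 := by
        rw [show b1 + (a1-b1)*1 = a1 by ring, show b2 + (a2-b2)*1 = a2 by ring,
          show f1 + (c1-f1)*1 = c1 by ring, show f2 + (c2-f2)*1 = c2 by ring]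
      have h0eq : phi (b1 + (a1-b1)*0) (b2 + (a2-b2)*0) - phi (f1 + (c1-f1)*0) (f2 + (c2-f2)*0)
          = phi b1 b2 - phi f1 f2 := by
        rw [show b1 + (a1-b1)*0 = b1 by ring, show b2 + (a2-b2)*0 = b2 by ring,
          show f1 + (c1-f1)*0 = f1 by ring, show f2 + (c2-f2)*0 = f2 by ring]
      rw [h1eq, h0eq] at hmv
      have : phi a1 a2 - phi b1 b2 - phi c1 c2 + phi f1 f2
          = (phi a1 a2 - phi c1 c2) - (phi b1 b2 - phi f1 f2) := by ring
      rw [this]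
      exact hmv
    have hcombo : J₁ xp y - J₁ xp y' - J₁ xm y + J₁ xm y'
        = -(ε * (phi a1 a2 - phi b1 b2 - phi c1 c2 + phi f1 f2)) := by
      rw [hphi xp y, hphi xp y', hphi xm y, hphi xm y']
      ring
    rw [hcombo, abs_neg, abs_mul, abs_of_pos hε]
    calc ε * |phi a1 a2 - phi b1 b2 - phi c1 c2 + phi f1 f2|
        ≤ ε * ((2 * M3 * R + 6 * M2^2 * R^2) * (Δx * Δy)) :=
          mul_le_mul_of_nonneg_left key hε.le
      _ ≤ 2 * ε * Δx * Δy * (2 * M3 * R + 3 * M2 ^ 2 * R ^ 2) := by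
          nlinarith [mul_nonneg (mul_nonneg (mul_nonneg hε.le hΔx0) hΔy0)
            (mul_nonneg hM3n hR0)]
end
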